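/- arXiv:2305.14545 — 2 statements merged into one kernel-verified Lean document; each statement's English description precedes it below -/
import Mathlib

section
/- Suppose the self-similar group G is contracting with nucleus N, the finite symmetric generating set S contains N, p ≥ 1, and η_{p,n₀} < 1 for some n₀ ≥ 1; set η_p := inf_{n ≥ 1} (η_{p,n})^{1/n}. Then for every η with η_p < η there exists C > 1 such that for every g ∈ G with g ≠ 1 and every n ≥ 0: the portrait satisfies |P(g) ∩ X^n| ≤ C·η^n·l(g)^p, and |P(g)| ≤ C·l(g)^p; in particular P(g) is finite. (Proposition 4.6 of the paper, made precise.) -/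
open Filter Topology
open scoped ENNReal NNReal

/-- A self-similar group: a group `G` acting on the set of finite words `List X`
by length-preserving bijections, together with a section (restriction) map. -/
structure SelfSimilarGroup (X : Type*) (G : Type*) [Group G] where
  act : G → List X → List X
  sec : G → List X → G
  length_act : ∀ g v, (act g v).length = v.length
  act_append : ∀ g v w, act g (v ++ w) = act g v ++ act (sec g v) w
  sec_append : ∀ g v w, sec g (v ++ w) = sec (sec g v) w
  act_one : ∀ v, act 1 v = v
  sec_one : ∀ v, sec 1 v = 1
  act_mul : ∀ g h v, act (g * h) v = act g (act h v)
  sec_mul : ∀ g h v, sec (g * h) v = sec g (act h v) * sec h v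

/-- Word length with respect to a finite generating set `S`. -/
noncomputable def wordLength {G : Type*} [Group G] (S : Finset G) (g : G) : ℕ :=
  sInf {n | ∃ w : List G, (∀ s ∈ w, s ∈ S) ∧ w.length = n ∧ w.prod = g}

/-- The contraction coefficient `η_{p,n} ∈ [0,∞]`: the limsup of
`(Σ_{v ∈ X^n} l(g|_v)^p)^{1/p} / l(g)` as `l(g) → ∞` (along the filter generated by
the sets `{g : l(g) ≥ m}`).  Words of length `n` are encoded as functions `Fin n → X`. -/
noncomputable def eta {X G : Type*} [Fintype X] [Group G]
    (A : SelfSimilarGroup X G) (S : Finset G) (p : ℝ) (n : ℕ) : ℝ≥0∞ :=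
  Filter.limsup
    (fun g : G =>
      (∑ f : Fin n → X, (wordLength S (A.sec g (List.ofFn f)) : ℝ≥0∞) ^ p) ^ (1 / p)
        / (wordLength S g : ℝ≥0∞))
    (Filter.comap (wordLength S) Filter.atTop)

/-- `N` is the nucleus of a contracting self-similar group: a finite subset containing `1`,
closed under sections, absorbing all sections of every element at deep enough levels. -/
def SelfSimilarGroup.IsNucleus {X G : Type*} [Group G]
    (A : SelfSimilarGroup X G) (N : Finset G) : Prop :=
  (1 : G) ∈ N ∧ (∀ g ∈ N, ∀ v : List X, A.sec g v ∈ N) ∧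
    ∀ g : G, ∃ n₀ : ℕ, ∀ v : List X, n₀ ≤ v.length → A.sec g v ∈ N

/-- The portrait of `g`: `{ε}` if `g ∈ N`, and otherwise the set of words all of whose
proper prefixes have section outside the nucleus. -/
def SelfSimilarGroup.portrait {X G : Type*} [Group G] (A : SelfSimilarGroup X G)
    (N : Finset G) (g : G) : Set (List X) :=
  {v | (g ∈ N ∧ v = []) ∨ (g ∉ N ∧ ∀ u : List X, u <+: v → u ≠ v → A.sec g u ∉ N)}


private lemma ncard_biUnion_le' {ι α : Type*} [DecidableEq ι] (s : Finset ι) (t : ι → Set α) :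
    (⋃ i ∈ s, t i).ncard ≤ ∑ i ∈ s, (t i).ncard := by
  induction s using Finset.induction_on with
  | empty => simp
  | insert a s' h ih =>
    rw [Finset.sum_insert h, Finset.set_biUnion_insert]
    exact (Set.ncard_union_le _ _).trans (Nat.add_le_add_left ih _)

private lemma ncard_length_eq' (X : Type*) [Fintype X] (m : ℕ) :
    ({v : List X | v.length = m}).ncard = Fintype.card X ^ m := by
  classical
  rw [← Nat.card_coe_set_eq]
  have e : {v : List X | v.length = m} ≃ (Fin m → X) := Equiv.vectorEquivFin X m
  rw [Nat.card_congr e]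
  simp [Nat.card_eq_fintype_card]

private lemma wordLength_spec' {G : Type*} [Group G] {S : Finset G}
    (hgen : Subgroup.closure (S : Set G) = ⊤) (hsym : ∀ s ∈ S, s⁻¹ ∈ S) (g : G) :
    ∃ w : List G, (∀ s ∈ w, s ∈ S) ∧ w.length = wordLength S g ∧ w.prod = g := by
  have hmem : g ∈ (Subgroup.closure (S : Set G)).toSubmonoid := by rw [hgen]; trivial
  rw [Subgroup.closure_toSubmonoid] at hmem
  obtain ⟨l, hl, hprod⟩ := Submonoid.exists_list_of_mem_closure hmem
  have hl' : ∀ s ∈ l, s ∈ S := by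
    intro s hs
    rcases hl s hs with h | h
    · exact h
    · have := hsym s⁻¹ (by simpa using h)
      simpa using this
  have hne : {k | ∃ w : List G, (∀ s ∈ w, s ∈ S) ∧ w.length = k ∧ w.prod = g}.Nonempty :=
    ⟨l.length, l, hl', rfl, hprod⟩
  exact Nat.sInf_mem hne

private lemma wordLength_one' {G : Type*} [Group G] (S : Finset G) : wordLength S (1 : G) = 0 :=
  Nat.sInf_eq_zero.mpr (Or.inl ⟨[], by simp, rfl, rfl⟩)

private lemma wordLength_pos' {G : Type*} [Group G] {S : Finset G}
    (hgen : Subgroup.closure (S : Set G) = ⊤) (hsym : ∀ s ∈ S, s⁻¹ ∈ S) {g : G} (hg : g ≠ 1) :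
    1 ≤ wordLength S g := by
  by_contra h
  obtain ⟨w, -, hlen, hprod⟩ := wordLength_spec' hgen hsym g
  have : w = [] := List.length_eq_zero_iff.mp (by omega)
  exact hg (by simpa [this] using hprod.symm)

/-- The level-`m` part of the portrait (for `g ∉ N`). -/
private def portLevel {X G : Type*} [Group G] (A : SelfSimilarGroup X G) (N : Finset G)
    (g : G) (m : ℕ) : Set (List X) :=
  {v | v.length = m ∧ ∀ u : List X, u <+: v → u ≠ v → A.sec g u ∉ N}

private lemma portLevel_finite {X G : Type*} [Finite X] [Group G] (A : SelfSimilarGroup X G)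
    (N : Finset G) (g : G) (m : ℕ) : (portLevel A N g m).Finite :=
  (List.finite_length_eq X m).subset (fun _ hv => hv.1)

private lemma portLevel_card {X G : Type*} [Fintype X] [Group G] (A : SelfSimilarGroup X G)
    (N : Finset G) (g : G) (m : ℕ) :
    (portLevel A N g m).ncard ≤ Fintype.card X ^ m := by
  rw [← ncard_length_eq' X m]
  exact Set.ncard_le_ncard (fun _ hv => hv.1) (List.finite_length_eq X m)

open scoped Classical in
private lemma portLevel_subset_iUnion {X G : Type*} [Group G] (A : SelfSimilarGroup X G)
    (N : Finset G) (g : G) {n m : ℕ} (hnm : n + 1 ≤ m) :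
    portLevel A N g m ⊆ ⋃ f : Fin n → X,
      (if A.sec g (List.ofFn f) ∈ N then (∅ : Set (List X))
        else (List.ofFn f ++ ·) '' portLevel A N (A.sec g (List.ofFn f)) (m - n)) := by
  rintro v ⟨hlen, hpref⟩
  have hn : n ≤ v.length := by omega
  have hu : (v.take n).length = n := by
    rw [List.length_take]; omega
  obtain ⟨f, hf⟩ : ∃ f : Fin n → X, List.ofFn f = v.take n := by
    refine ⟨fun i => (v.take n).get (Fin.cast hu.symm i), ?_⟩
    apply List.ext_get (by simp [hu])
    intro i h1 h2
    simp [List.get_ofFn]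
  refine Set.mem_iUnion.mpr ⟨f, ?_⟩
  have hne : v.take n ≠ v := by
    intro h
    have := congrArg List.length h
    rw [hu] at this; omega
  have hnotN : A.sec g (List.ofFn f) ∉ N := by
    rw [hf]; exact hpref _ (List.take_prefix n v) hne
  rw [if_neg hnotN]
  refine ⟨v.drop n, ⟨?_, ?_⟩, ?_⟩
  · rw [List.length_drop]; omega
  · intro u hu2 hne2
    obtain ⟨t, ht⟩ := hu2
    have hpre : (v.take n ++ u) <+: v := by
      refine ⟨t, ?_⟩
      rw [List.append_assoc, ht, List.take_append_drop]
    have hnev : v.take n ++ u ≠ v := by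
      intro h
      apply hne2
      have : v.take n ++ u = v.take n ++ v.drop n := by rw [h, List.take_append_drop]
      exact List.append_cancel_left this
    have := hpref _ hpre hnev
    rw [A.sec_append] at this
    rw [hf]
    exact this
  · show List.ofFn f ++ List.drop n v = v
    rw [hf, List.take_append_drop]

/-- Proposition 4.6. Suppose `G` is contracting with nucleus `N ⊆ S`,
`p ≥ 1` and `η_{p,n₀} < 1` for some `n₀ ≥ 1`; set `η_p := inf_{n ≥ 1} η_{p,n}^{1/n}`.
Then for every `η > η_p` there is `C > 1` with `|P(g) ∩ X^n| ≤ C·η^n·l(g)^p` and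
`|P(g)| ≤ C·l(g)^p` for every `g ≠ 1` and `n ≥ 0`; in particular `P(g)` is finite. -/
theorem portrait_size_bound {X G : Type*} [Fintype X] [Nonempty X] [Group G]
    (A : SelfSimilarGroup X G) (S N : Finset G)
    (hgen : Subgroup.closure (S : Set G) = ⊤)
    (hsym : ∀ s ∈ S, s⁻¹ ∈ S)
    (hN : A.IsNucleus N) (hNS : N ⊆ S)
    (p : ℝ) (hp : 1 ≤ p)
    (hcontr : ∃ n₀ : ℕ, 1 ≤ n₀ ∧ eta A S p n₀ < 1)
    (η : ℝ≥0∞)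
    (hη : (⨅ (n : ℕ) (_ : 1 ≤ n), eta A S p n ^ ((n : ℝ)⁻¹)) < η) :
    ∃ C : ℝ≥0, 1 < C ∧ ∀ g : G, g ≠ 1 →
      (A.portrait N g).Finite ∧
      (∀ n : ℕ, ((A.portrait N g ∩ {v : List X | v.length = n}).ncard : ℝ≥0∞)
          ≤ (C : ℝ≥0∞) * η ^ n * (wordLength S g : ℝ≥0∞) ^ p) ∧
      ((A.portrait N g).ncard : ℝ≥0∞) ≤ (C : ℝ≥0∞) * (wordLength S g : ℝ≥0∞) ^ p := by
  classical
  obtain ⟨n₀, hn₀, hn₀lt⟩ := hcontr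
  have hp0 : (0:ℝ) < p := lt_of_lt_of_le one_pos hp
  have hpne : p ≠ 0 := ne_of_gt hp0
  set Ip : ℝ≥0∞ := ⨅ (n : ℕ) (_ : 1 ≤ n), eta A S p n ^ ((n : ℝ)⁻¹) with hIpdef
  have hIp1 : Ip < 1 := by
    have h1 : Ip ≤ eta A S p n₀ ^ ((n₀ : ℝ)⁻¹) := iInf₂_le n₀ hn₀
    refine lt_of_le_of_lt h1 (ENNReal.rpow_lt_one hn₀lt ?_)
    have : (0:ℝ) < (n₀ : ℝ) := by exact_mod_cast hn₀
    positivity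
  obtain ⟨η₁, hη₁l, hη₁r⟩ := exists_between (lt_min hη hIp1)
  have hη₁η : η₁ < η := hη₁r.trans_le (min_le_left _ _)
  have hη₁1 : η₁ < 1 := hη₁r.trans_le (min_le_right _ _)
  have hη₁0 : 0 < η₁ := (zero_le : 0 ≤ Ip).trans_lt hη₁l
  have hη₁top : η₁ ≠ ⊤ := (hη₁1.trans_le le_top).ne
  -- pick the level n with contraction below η₁^n
  obtain ⟨n, hn1, hnlt⟩ : ∃ n : ℕ, 1 ≤ n ∧ eta A S p n ^ ((n:ℝ)⁻¹) < η₁ := by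
    have h := hη₁l
    rw [hIpdef, iInf_lt_iff] at h
    obtain ⟨n, hn⟩ := h
    by_cases h1 : 1 ≤ n
    · exact ⟨n, h1, by rwa [iInf_pos h1] at hn⟩
    · rw [iInf_neg h1] at hn
      exact absurd hn (by simp)
  have heta : eta A S p n < η₁ ^ n := by
    have hne : ((n:ℝ)) ≠ 0 := Nat.cast_ne_zero.mpr (by omega)
    calc eta A S p n = (eta A S p n ^ ((n:ℝ)⁻¹)) ^ (n:ℝ) := (ENNReal.rpow_inv_rpow hne _).symm
    _ < η₁ ^ (n:ℝ) := ENNReal.rpow_lt_rpow hnlt (by positivity)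
    _ = η₁ ^ n := ENNReal.rpow_natCast _ _
  -- extract eventual bound and turn it into a sum bound
  have hev := eventually_lt_of_limsup_lt heta
  rw [Filter.eventually_comap] at hev
  obtain ⟨m₁, hm₁⟩ := Filter.eventually_atTop.mp hev
  set m₀ : ℕ := max m₁ 1 with hm₀def
  have hsum : ∀ g : G, m₀ ≤ wordLength S g →
      (∑ f : Fin n → X, (wordLength S (A.sec g (List.ofFn f)) : ℝ≥0∞) ^ p)
        ≤ η₁ ^ n * (wordLength S g : ℝ≥0∞) ^ p := by
    intro g hg
    have hdiv := hm₁ (wordLength S g) (le_trans (le_max_left _ _) hg) g rfl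
    have hwl1 : 1 ≤ wordLength S g := le_trans (le_max_right _ _) hg
    have hc0 : (wordLength S g : ℝ≥0∞) ≠ 0 := Nat.cast_ne_zero.mpr (by omega)
    have hctop : (wordLength S g : ℝ≥0∞) ≠ ⊤ := ENNReal.natCast_ne_top _
    rw [ENNReal.div_lt_iff (Or.inl hc0) (Or.inl hctop)] at hdiv
    rw [one_div] at hdiv
    have h2 : (∑ f : Fin n → X, (wordLength S (A.sec g (List.ofFn f)) : ℝ≥0∞) ^ p)
        ≤ (η₁ ^ n * (wordLength S g : ℝ≥0∞)) ^ p := by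
      calc (∑ f : Fin n → X, (wordLength S (A.sec g (List.ofFn f)) : ℝ≥0∞) ^ p)
          = ((∑ f : Fin n → X, (wordLength S (A.sec g (List.ofFn f)) : ℝ≥0∞) ^ p) ^ (p⁻¹)) ^ p :=
            (ENNReal.rpow_inv_rpow hpne _).symm
      _ ≤ (η₁ ^ n * (wordLength S g : ℝ≥0∞)) ^ p := ENNReal.rpow_le_rpow hdiv.le hp0.le
    rw [ENNReal.mul_rpow_of_nonneg _ _ hp0.le] at h2
    refine h2.trans (mul_le_mul' ?_ le_rfl)
    have hle1 : η₁ ^ n ≤ 1 := pow_le_one' hη₁1.le n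
    calc (η₁ ^ n) ^ p ≤ (η₁ ^ n) ^ (1:ℝ) := ENNReal.rpow_le_rpow_of_exponent_ge hle1 hp
    _ = η₁ ^ n := ENNReal.rpow_one _
  -- word length facts
  have one_le_wlp : ∀ g : G, g ≠ 1 → (1:ℝ≥0∞) ≤ (wordLength S g : ℝ≥0∞) ^ p := by
    intro g hg
    have h1 : (1:ℝ≥0∞) ≤ (wordLength S g : ℝ≥0∞) := by
      exact_mod_cast wordLength_pos' hgen hsym hg
    calc (1:ℝ≥0∞) = 1 ^ p := (ENNReal.one_rpow p).symm
    _ ≤ _ := ENNReal.rpow_le_rpow h1 hp0.le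
  -- the finitely many elements of small length, and the uniform nucleus level R₀
  have hFfin : {g : G | wordLength S g ≤ m₀}.Finite := by
    have hfin2 : {l : List {x // x ∈ S} | l.length ≤ m₀}.Finite := List.finite_length_le _ m₀
    have hfin3 : ((fun l : List {x // x ∈ S} => (l.map Subtype.val).prod) ''
        {l | l.length ≤ m₀}).Finite := hfin2.image _
    refine hfin3.subset ?_
    intro g hg
    obtain ⟨w, hwS, hlen, hprod⟩ := wordLength_spec' hgen hsym g
    refine ⟨w.attach.map (fun x => ⟨x.1, hwS x.1 x.2⟩), ?_, ?_⟩
    · simp only [Set.mem_setOf_eq, List.length_map, List.length_attach]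
      have : wordLength S g ≤ m₀ := hg
      omega
    · simp only [List.map_map]
      have h4 : (List.map (fun x : {a // a ∈ w} => (x : G)) w.attach) = w := by
        simp
      calc (List.map (Subtype.val ∘ fun x : {a // a ∈ w} =>
              (⟨x.1, hwS x.1 x.2⟩ : {x // x ∈ S})) w.attach).prod
          = (List.map (fun x : {a // a ∈ w} => (x : G)) w.attach).prod := rfl
      _ = w.prod := by rw [h4]
      _ = g := hprod
  choose r hr using hN.2.2
  set R₀ : ℕ := hFfin.toFinset.sup r with hR₀def
  have hR₀ : ∀ g : G, wordLength S g ≤ m₀ → ∀ v : List X, R₀ ≤ v.length → A.sec g v ∈ N := by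
    intro g hg v hv
    exact hr g v (le_trans (Finset.le_sup (hFfin.mem_toFinset.mpr hg)) hv)
  set R : ℕ := max (R₀ + 1) (n + 1) with hRdef
  -- levels above R₀ are empty for short elements
  have hPmzero : ∀ g : G, wordLength S g ≤ m₀ → ∀ m, R₀ + 1 ≤ m → portLevel A N g m = ∅ := by
    intro g hg m hm
    ext v
    simp only [Set.mem_empty_iff_false, iff_false]
    rintro ⟨hlen, hpref⟩
    have h1 : (v.take R₀).length = R₀ := by rw [List.length_take]; omega
    have h2 : v.take R₀ ≠ v := by
      intro h
      have := congrArg List.length h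
      rw [h1] at this; omega
    exact hpref _ (List.take_prefix _ _) h2 (hR₀ g hg _ (le_of_eq h1.symm))
  -- the basic constant
  set Cbig : ℝ≥0∞ := (Fintype.card X : ℝ≥0∞) ^ R * (η₁⁻¹) ^ R with hCbigdef
  have hX1 : (1:ℝ≥0∞) ≤ (Fintype.card X : ℝ≥0∞) := by
    have := Fintype.card_pos (α := X)
    exact_mod_cast this
  have hinv1 : (1:ℝ≥0∞) ≤ η₁⁻¹ := ENNReal.one_le_inv.mpr hη₁1.le
  have hCbigtop : Cbig ≠ ⊤ :=
    ENNReal.mul_ne_top (ENNReal.pow_ne_top (ENNReal.natCast_ne_top _))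
      (ENNReal.pow_ne_top (ENNReal.inv_ne_top.mpr hη₁0.ne'))
  have hcrude : ∀ m : ℕ, m ≤ R → ((Fintype.card X : ℝ≥0∞)) ^ m ≤ Cbig * η₁ ^ m := by
    intro m hm
    have h1 : (1:ℝ≥0∞) ≤ (η₁⁻¹) ^ R * η₁ ^ m := by
      have e : (η₁⁻¹) ^ R * η₁ ^ m = (η₁⁻¹)^(R - m) * ((η₁⁻¹)^m * η₁^m) := by
        rw [← mul_assoc, ← pow_add]
        congr 2
        omega
      rw [e, ← mul_pow, ENNReal.inv_mul_cancel hη₁0.ne' hη₁top, one_pow, mul_one]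
      exact one_le_pow_of_one_le' hinv1 _
    calc ((Fintype.card X : ℝ≥0∞)) ^ m
        = ((Fintype.card X : ℝ≥0∞)) ^ m * 1 := (mul_one _).symm
    _ ≤ ((Fintype.card X : ℝ≥0∞)) ^ R * ((η₁⁻¹) ^ R * η₁ ^ m) :=
        mul_le_mul' (pow_le_pow_right' hX1 hm) h1
    _ = Cbig * η₁ ^ m := by rw [hCbigdef, mul_assoc]
  -- the key inductive estimate
  have key : ∀ m : ℕ, ∀ g : G, g ∉ N →
      ((portLevel A N g m).ncard : ℝ≥0∞) ≤ Cbig * η₁ ^ m * (wordLength S g : ℝ≥0∞) ^ p := by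
    intro m
    induction m using Nat.strong_induction_on with
    | _ m ih =>
      intro g hgN
      have hg1 : g ≠ 1 := fun h => hgN (h ▸ hN.1)
      by_cases hmR : m < R
      · calc ((portLevel A N g m).ncard : ℝ≥0∞)
            ≤ ((Fintype.card X ^ m : ℕ) : ℝ≥0∞) := by exact_mod_cast portLevel_card A N g m
        _ = ((Fintype.card X : ℝ≥0∞)) ^ m := by push_cast; ring
        _ ≤ Cbig * η₁ ^ m := hcrude m (by omega)
        _ = Cbig * η₁ ^ m * 1 := (mul_one _).symm
        _ ≤ _ := mul_le_mul' le_rfl (one_le_wlp g hg1)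
      · push_neg at hmR
        rcases le_or_gt m₀ (wordLength S g) with hge | hlt
        · -- contraction case
          have hn1m : n + 1 ≤ m := le_trans (le_max_right _ _) hmR
          have hsub := portLevel_subset_iUnion A N g (n := n) (m := m) hn1m
          have hfinT : ∀ f : Fin n → X,
              (if A.sec g (List.ofFn f) ∈ N then (∅ : Set (List X))
                else (List.ofFn f ++ ·) '' portLevel A N (A.sec g (List.ofFn f)) (m - n)).Finite := by
            intro f
            split
            · exact Set.finite_empty
            · exact (portLevel_finite A N _ _).image _
          have hcard1 : (portLevel A N g m).ncard ≤
              ∑ f : Fin n → X, (if A.sec g (List.ofFn f) ∈ N then (∅ : Set (List X))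
                else (List.ofFn f ++ ·) '' portLevel A N (A.sec g (List.ofFn f)) (m - n)).ncard := by
            refine le_trans (Set.ncard_le_ncard hsub (Set.finite_iUnion hfinT)) ?_
            have e : (⋃ f : Fin n → X, (if A.sec g (List.ofFn f) ∈ N then (∅ : Set (List X))
                else (List.ofFn f ++ ·) '' portLevel A N (A.sec g (List.ofFn f)) (m - n)))
                = ⋃ f ∈ (Finset.univ : Finset (Fin n → X)),
                  (if A.sec g (List.ofFn f) ∈ N then (∅ : Set (List X))
                    else (List.ofFn f ++ ·) '' portLevel A N (A.sec g (List.ofFn f)) (m - n)) := by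
              simp
            rw [e]
            exact ncard_biUnion_le' _ _
          have hterm : ∀ f : Fin n → X,
              (((if A.sec g (List.ofFn f) ∈ N then (∅ : Set (List X))
                else (List.ofFn f ++ ·) '' portLevel A N (A.sec g (List.ofFn f)) (m - n)).ncard : ℕ) : ℝ≥0∞)
              ≤ Cbig * η₁ ^ (m - n) * (wordLength S (A.sec g (List.ofFn f)) : ℝ≥0∞) ^ p := by
            intro f
            split
            · simp
            · rename_i hfN
              rw [Set.ncard_image_of_injective _
                (fun a b h => List.append_cancel_left h : Function.Injective (List.ofFn f ++ ·))]
              exact ih (m - n) (by omega) _ hfN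
          calc ((portLevel A N g m).ncard : ℝ≥0∞)
              ≤ ∑ f : Fin n → X, (((if A.sec g (List.ofFn f) ∈ N then (∅ : Set (List X))
                else (List.ofFn f ++ ·) '' portLevel A N (A.sec g (List.ofFn f)) (m - n)).ncard : ℕ) : ℝ≥0∞) := by
                exact_mod_cast hcard1
          _ ≤ ∑ f : Fin n → X, Cbig * η₁ ^ (m - n) * (wordLength S (A.sec g (List.ofFn f)) : ℝ≥0∞) ^ p :=
              Finset.sum_le_sum (fun f _ => hterm f)
          _ = Cbig * η₁ ^ (m - n) *
              ∑ f : Fin n → X, (wordLength S (A.sec g (List.ofFn f)) : ℝ≥0∞) ^ p := by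
              rw [← Finset.mul_sum]
          _ ≤ Cbig * η₁ ^ (m - n) * (η₁ ^ n * (wordLength S g : ℝ≥0∞) ^ p) :=
              mul_le_mul' le_rfl (hsum g hge)
          _ = Cbig * η₁ ^ m * (wordLength S g : ℝ≥0∞) ^ p := by
              have hmn : η₁ ^ (m - n) * η₁ ^ n = η₁ ^ m := by
                rw [← pow_add]
                congr 1
                omega
              rw [← hmn]
              ring
        · -- short elements: the level is empty
          have h0 : portLevel A N g m = ∅ :=
            hPmzero g (by omega) m (by omega)
          rw [h0]
          simp
  -- final constants
  set Ctot : ℝ≥0∞ := Cbig * (1 - η₁)⁻¹ with hCtotdef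
  have h1m0 : (1 - η₁) ≠ 0 := by
    have : 0 < 1 - η₁ := tsub_pos_iff_lt.mpr hη₁1
    exact this.ne'
  have hCtottop : Ctot ≠ ⊤ :=
    ENNReal.mul_ne_top hCbigtop (ENNReal.inv_ne_top.mpr h1m0)
  have hCbigCtot : Cbig ≤ Ctot := by
    rw [hCtotdef]
    calc Cbig = Cbig * 1 := (mul_one _).symm
    _ ≤ Cbig * (1 - η₁)⁻¹ := mul_le_mul' le_rfl (ENNReal.one_le_inv.mpr tsub_le_self)
  refine ⟨Ctot.toNNReal + 2, ?_, ?_⟩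
  · calc (1:ℝ≥0) < 2 := one_lt_two
    _ ≤ Ctot.toNNReal + 2 := le_add_self
  have hCcoe : Ctot ≤ ((Ctot.toNNReal + 2 : ℝ≥0) : ℝ≥0∞) := by
    rw [ENNReal.coe_add, ENNReal.coe_toNNReal hCtottop]
    exact le_self_add
  have hCbigcoe : Cbig ≤ ((Ctot.toNNReal + 2 : ℝ≥0) : ℝ≥0∞) := hCbigCtot.trans hCcoe
  have hCone : (1:ℝ≥0∞) ≤ ((Ctot.toNNReal + 2 : ℝ≥0) : ℝ≥0∞) := by
    rw [ENNReal.coe_add]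
    calc (1:ℝ≥0∞) ≤ 2 := one_le_two
    _ = ((2:ℝ≥0) : ℝ≥0∞) := by norm_num
    _ ≤ _ := le_add_self
  intro g hg1
  by_cases hgN : g ∈ N
  · -- g in the nucleus: portrait is {[]}
    have hport : A.portrait N g = {([] : List X)} := by
      ext v
      simp [SelfSimilarGroup.portrait, hgN]
    have hone : (1:ℝ≥0∞) ≤ ((Ctot.toNNReal + 2 : ℝ≥0) : ℝ≥0∞) * (wordLength S g : ℝ≥0∞) ^ p := by
      calc (1:ℝ≥0∞) = 1 * 1 := (mul_one _).symm
      _ ≤ _ := mul_le_mul' hCone (one_le_wlp g hg1)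
    refine ⟨by rw [hport]; exact Set.finite_singleton _, ?_, ?_⟩
    · intro m
      rcases Nat.eq_zero_or_pos m with rfl | hm
      · have he : A.portrait N g ∩ {v : List X | v.length = 0} = {([] : List X)} := by
          rw [hport]
          ext v
          simp +contextual [List.length_eq_zero_iff]
        rw [he, Set.ncard_singleton]
        simpa using hone
      · have he : A.portrait N g ∩ {v : List X | v.length = m} = ∅ := by
          rw [hport]
          ext v
          simp only [Set.mem_inter_iff, Set.mem_singleton_iff, Set.mem_setOf_eq,
            Set.mem_empty_iff_false, iff_false, not_and]
          rintro rfl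
          simp
          omega
        rw [he]
        simp
    · rw [hport, Set.ncard_singleton]
      simpa using hone
  · -- g outside the nucleus
    have hport2 : ∀ m : ℕ, A.portrait N g ∩ {v : List X | v.length = m} = portLevel A N g m := by
      intro m
      ext v
      simp only [SelfSimilarGroup.portrait, portLevel, Set.mem_inter_iff, Set.mem_setOf_eq]
      constructor
      · rintro ⟨h1 | h1, h2⟩
        · exact absurd h1.1 hgN
        · exact ⟨h2, h1.2⟩
      · rintro ⟨h1, h2⟩
        exact ⟨Or.inr ⟨hgN, h2⟩, h1⟩
    have hlen_le : ∀ v ∈ A.portrait N g, v.length ≤ r g := by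
      intro v hv
      by_contra hlen
      push_neg at hlen
      rcases hv with h | h
      · exact hgN h.1
      · have h1 : (v.take (r g)).length = r g := by rw [List.length_take]; omega
        have h2 : v.take (r g) ≠ v := by
          intro he
          have := congrArg List.length he
          rw [h1] at this; omega
        exact h.2 _ (List.take_prefix _ _) h2 (hr g _ (le_of_eq h1.symm))
    have hporteq : A.portrait N g = ⋃ m ∈ Finset.range (r g + 1), portLevel A N g m := by
      ext v
      constructor
      · intro hv
        have hm : v.length ∈ Finset.range (r g + 1) := by
          rw [Finset.mem_range]
          have := hlen_le v hv
          omega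
        refine Set.mem_biUnion hm ?_
        rcases hv with h | h
        · exact absurd h.1 hgN
        · exact ⟨rfl, h.2⟩
      · intro hv
        simp only [Set.mem_iUnion] at hv
        obtain ⟨m, -, hm⟩ := hv
        exact Or.inr ⟨hgN, hm.2⟩
    refine ⟨?_, ?_, ?_⟩
    · rw [hporteq]
      exact Set.Finite.biUnion (Finset.finite_toSet _) (fun m _ => portLevel_finite A N g m)
    · intro m
      rw [hport2 m]
      refine (key m g hgN).trans ?_
      exact mul_le_mul' (mul_le_mul' hCbigcoe (pow_le_pow_left' hη₁η.le m)) le_rfl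
    · rw [hporteq]
      have h1 : ((⋃ m ∈ Finset.range (r g + 1), portLevel A N g m).ncard : ℝ≥0∞)
          ≤ ∑ m ∈ Finset.range (r g + 1), ((portLevel A N g m).ncard : ℝ≥0∞) := by
        exact_mod_cast ncard_biUnion_le' (Finset.range (r g + 1)) (fun m => portLevel A N g m)
      refine h1.trans ?_
      calc ∑ m ∈ Finset.range (r g + 1), ((portLevel A N g m).ncard : ℝ≥0∞)
          ≤ ∑ m ∈ Finset.range (r g + 1), Cbig * η₁ ^ m * (wordLength S g : ℝ≥0∞) ^ p :=
            Finset.sum_le_sum (fun m _ => key m g hgN)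
      _ = Cbig * (wordLength S g : ℝ≥0∞) ^ p * ∑ m ∈ Finset.range (r g + 1), η₁ ^ m := by
            rw [Finset.mul_sum]
            congr 1
            ext m
            ring
      _ ≤ Cbig * (wordLength S g : ℝ≥0∞) ^ p * (1 - η₁)⁻¹ := by
            refine mul_le_mul' le_rfl ?_
            refine le_trans (ENNReal.sum_le_tsum _) ?_
            exact le_of_eq (ENNReal.tsum_geometric η₁)
      _ = Ctot * (wordLength S g : ℝ≥0∞) ^ p := by rw [hCtotdef]; ring
      _ ≤ ((Ctot.toNNReal + 2 : ℝ≥0) : ℝ≥0∞) * (wordLength S g : ℝ≥0∞) ^ p :=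
            mul_le_mul' hCcoe le_rfl
end

section
/- Let G be a finitely generated self-similar group over X, let p ≥ 1, and let g₁, …, g_m ∈ G be pairwise non-conjugate elements of infinite order such that for every i and every x ∈ X, the element (g_i^{k})|_x, where k = k_{g_i,x} is the length of the cycle of x under g_i on X, either has finite order or is conjugate in G to some g_j (i.e., the span U of the conjugacy classes [g₁],…,[g_m] is invariant under the Thurston p-map T_p). Let A be the m×m real matrix with entries A_{ij} = Σ_{x∈X} k_{g_i,x}^{−p} · 𝟙[(g_i^{k_{g_i,x}})|_x is conjugate in G to g_j] (the matrix of T_p restricted to U in the basis of these conjugacy classes). If η_{p,n₀} < 1 for some n₀ ≥ 1 (i.e. the ℓ^p-contraction coefficient η_p is < 1), then the spectral radius of A is strictly less than 1: every eigenvalue z ∈ ℂ of A, viewed as a complex matrix, satisfies |z| < 1. (Theorem 4.8 of the paper.) -/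
open Filter Topology
open scoped ENNReal NNReal

/-- The length of the cycle of the word `v` under the permutation induced by `g`:
the least `k ≥ 1` with `g^k(v) = v`. -/
noncomputable def cycLen {X G : Type*} [Group G] (A : SelfSimilarGroup X G)
    (g : G) (v : List X) : ℕ :=
  sInf {k | 1 ≤ k ∧ A.act (g ^ k) v = v}

open Classical in
/-- The matrix of the Thurston `p`-map on the span of the conjugacy classes
`[g 0],…,[g (m-1)]`: `A_{ij} = Σ_{x∈X} k_{g_i,x}^{−p} · 𝟙[(g_i^{k_{g_i,x}})|_x ~ g_j]`. -/
noncomputable def thurstonMatrix {X G : Type*} [Fintype X] [Group G]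
    (A : SelfSimilarGroup X G) (p : ℝ) {m : ℕ} (g : Fin m → G) :
    Matrix (Fin m) (Fin m) ℝ :=
  Matrix.of fun i j =>
    ∑ x : X,
      (cycLen A (g i) [x] : ℝ) ^ (-p) *
        (if IsConj (A.sec ((g i) ^ (cycLen A (g i) [x])) [x]) (g j) then 1 else 0)


/-! ### Auxiliary lemmas -/

namespace SelfSimilarGroup

variable {X G : Type*} [Group G] (A : SelfSimilarGroup X G)

lemma act_nil (g : G) : A.act g [] = [] :=
  List.length_eq_zero_iff.mp (A.length_act g [])

lemma act_act (g h : G) (v : List X) : A.act g (A.act h v) = A.act (g * h) v :=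
  (A.act_mul g h v).symm

lemma act_leftInverse (g : G) (v : List X) : A.act g⁻¹ (A.act g v) = v := by
  rw [act_act, inv_mul_cancel, A.act_one]

lemma act_injective (g : G) : Function.Injective (A.act g) := by
  intro a b h
  have h2 := congrArg (A.act g⁻¹) h
  rwa [act_leftInverse, act_leftInverse] at h2

lemma act_pow_add (g : G) (a b : ℕ) (v : List X) :
    A.act (g ^ (a + b)) v = A.act (g ^ a) (A.act (g ^ b) v) := by
  rw [pow_add, A.act_mul]

lemma act_pow_fix {g : G} {v : List X} {k : ℕ} (h : A.act (g ^ k) v = v) :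
    ∀ q : ℕ, A.act (g ^ (k * q)) v = v := by
  intro q; induction q with
  | zero => simpa using A.act_one v
  | succ q ih => rw [Nat.mul_succ, act_pow_add, h, ih]

lemma sec_pow_fix {g : G} {v : List X} {k : ℕ} (h : A.act (g ^ k) v = v) :
    ∀ q : ℕ, A.sec (g ^ (k * q)) v = (A.sec (g ^ k) v) ^ q := by
  intro q; induction q with
  | zero => simpa using A.sec_one v
  | succ q ih => rw [Nat.mul_succ, pow_add, A.sec_mul, h, ih, ← pow_succ]

lemma act_fix_of_act_eq {g : G} {v : List X} {a d : ℕ}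
    (h : A.act (g ^ (a + d)) v = A.act (g ^ a) v) : A.act (g ^ d) v = v := by
  rw [act_pow_add] at h
  exact A.act_injective (g ^ a) h

lemma exists_act_pow_fix [Fintype X] (g : G) (v : List X) :
    ∃ k, 1 ≤ k ∧ A.act (g ^ k) v = v := by
  have hfin : Finite {l : List X // l.length = v.length} :=
    (List.finite_length_eq X v.length).to_subtype
  obtain ⟨a, b, hab, heq⟩ := Finite.exists_ne_map_eq_of_infinite
    (fun t : ℕ => (⟨A.act (g ^ t) v, A.length_act _ v⟩ : {l : List X // l.length = v.length}))
  have heq' : A.act (g ^ a) v = A.act (g ^ b) v := congrArg Subtype.val heq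
  rcases lt_or_gt_of_ne hab with h | h
  · refine ⟨b - a, by omega, A.act_fix_of_act_eq (a := a) ?_⟩
    rw [show a + (b - a) = b by omega]; exact heq'.symm
  · refine ⟨a - b, by omega, A.act_fix_of_act_eq (a := b) ?_⟩
    rwa [show b + (a - b) = a by omega]

end SelfSimilarGroup

section CycLen

variable {X G : Type*} [Group G] [Fintype X] (A : SelfSimilarGroup X G)

lemma cycLen_mem (g : G) (v : List X) :
    1 ≤ cycLen A g v ∧ A.act (g ^ cycLen A g v) v = v :=
  Nat.sInf_mem (by obtain ⟨k, hk⟩ := A.exists_act_pow_fix g v; exact ⟨k, hk⟩)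

lemma one_le_cycLen (g : G) (v : List X) : 1 ≤ cycLen A g v := (cycLen_mem A g v).1

lemma act_cycLen_fix (g : G) (v : List X) : A.act (g ^ cycLen A g v) v = v :=
  (cycLen_mem A g v).2

lemma act_pow_fix_iff (g : G) (v : List X) (t : ℕ) :
    A.act (g ^ t) v = v ↔ cycLen A g v ∣ t := by
  constructor
  · intro h
    set k := cycLen A g v with hk
    have hk1 : 1 ≤ k := one_le_cycLen A g v
    by_contra hnd
    have ht : t % k ≠ 0 := fun h0 => hnd (Nat.dvd_of_mod_eq_zero h0)
    have hfix : A.act (g ^ (t % k)) v = v := by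
      have h1 : A.act (g ^ (k * (t / k) + t % k)) v = v := by
        rw [Nat.div_add_mod t k] at *; exact h
      rw [SelfSimilarGroup.act_pow_add] at h1
      have h2 := A.act_pow_fix (act_cycLen_fix A g v) (t / k)
      exact A.act_injective _ (h1.trans h2.symm)
    have hle : k ≤ t % k := Nat.sInf_le ⟨Nat.one_le_iff_ne_zero.mpr ht, hfix⟩
    have := Nat.mod_lt t (by omega : 0 < k)
    omega
  · rintro ⟨q, rfl⟩; exact A.act_pow_fix (act_cycLen_fix A g v) q

lemma cycLen_le_card (g : G) (v : List X) :
    cycLen A g v ≤ Fintype.card (Fin v.length → X) := by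
  set k := cycLen A g v with hk
  have hinj : Function.Injective (fun t : Fin k => fun i : Fin v.length =>
      (A.act (g ^ (t : ℕ)) v).get (Fin.cast (A.length_act _ v).symm i)) := by
    intro a b hab
    have hlists : A.act (g ^ (a : ℕ)) v = A.act (g ^ (b : ℕ)) v := by
      apply List.ext_get (by rw [A.length_act, A.length_act])
      intro i h1 h2
      have := congrFun hab ⟨i, by rwa [A.length_act] at h1⟩
      exact this
    by_contra hne
    have hvne : (a : ℕ) ≠ (b : ℕ) := fun h => hne (Fin.ext h)
    have key : ∀ x y : Fin k, (x : ℕ) < (y : ℕ) →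
        A.act (g ^ (x : ℕ)) v = A.act (g ^ (y : ℕ)) v → False := by
      intro x y hxy hxyeq
      have hfix : A.act (g ^ ((y : ℕ) - (x : ℕ))) v = v := by
        apply A.act_fix_of_act_eq (a := (x : ℕ))
        rw [show (x : ℕ) + ((y : ℕ) - (x : ℕ)) = (y : ℕ) by omega]
        exact hxyeq.symm
      have hdvd := (act_pow_fix_iff A g v _).mp hfix
      have := Nat.le_of_dvd (by omega) hdvd
      have := y.isLt
      omega
    rcases Nat.lt_or_ge (a : ℕ) (b : ℕ) with h | h
    · exact key a b h hlists
    · exact key b a (by omega) hlists.symm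
  calc k = Fintype.card (Fin k) := (Fintype.card_fin k).symm
    _ ≤ _ := Fintype.card_le_of_injective _ hinj

end CycLen

section WordLength

variable {G : Type*} [Group G] {S : Finset G}

lemma exists_word (hgen : Subgroup.closure (S : Set G) = ⊤)
    (hsym : ∀ s ∈ S, s⁻¹ ∈ S) (g : G) :
    ∃ w : List G, (∀ s ∈ w, s ∈ S) ∧ w.prod = g := by
  have hg : g ∈ Subgroup.closure (S : Set G) := by rw [hgen]; trivial
  induction hg using Subgroup.closure_induction with
  | mem x hx => exact ⟨[x], by simpa using hx, by simp⟩
  | one => exact ⟨[], by simp, rfl⟩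
  | mul x y hx hy ihx ihy =>
      obtain ⟨wx, hwx, hpx⟩ := ihx
      obtain ⟨wy, hwy, hpy⟩ := ihy
      refine ⟨wx ++ wy, ?_, by rw [List.prod_append, hpx, hpy]⟩
      intro s hs; rcases List.mem_append.mp hs with h | h
      exacts [hwx s h, hwy s h]
  | inv x hx ihx =>
      obtain ⟨w, hw, hpw⟩ := ihx
      refine ⟨(w.map fun y => y⁻¹).reverse, ?_, ?_⟩
      · intro s hs
        rw [List.mem_reverse, List.mem_map] at hs
        obtain ⟨t, ht, rfl⟩ := hs
        exact hsym t (hw t ht)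
      · rw [← List.prod_inv_reverse, hpw]

lemma wordLength_le {g : G} (w : List G) (hw : ∀ s ∈ w, s ∈ S) (hprod : w.prod = g) :
    wordLength S g ≤ w.length := Nat.sInf_le ⟨w, hw, rfl, hprod⟩

lemma wordLength_exists_min (hgen : Subgroup.closure (S : Set G) = ⊤)
    (hsym : ∀ s ∈ S, s⁻¹ ∈ S) (g : G) :
    ∃ w : List G, (∀ s ∈ w, s ∈ S) ∧ w.length = wordLength S g ∧ w.prod = g := by
  have hne : {n | ∃ w : List G, (∀ s ∈ w, s ∈ S) ∧ w.length = n ∧ w.prod = g}.Nonempty := by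
    obtain ⟨w, h1, h2⟩ := exists_word hgen hsym g
    exact ⟨w.length, w, h1, rfl, h2⟩
  exact Nat.sInf_mem hne

lemma wordLength_mul_le (hgen : Subgroup.closure (S : Set G) = ⊤)
    (hsym : ∀ s ∈ S, s⁻¹ ∈ S) (g h : G) :
    wordLength S (g * h) ≤ wordLength S g + wordLength S h := by
  obtain ⟨wg, hwg, hlg, hpg⟩ := wordLength_exists_min hgen hsym g
  obtain ⟨wh, hwh, hlh, hph⟩ := wordLength_exists_min hgen hsym h
  have := wordLength_le (S := S) (wg ++ wh)
    (by intro s hs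
        rcases List.mem_append.mp hs with h' | h'
        exacts [hwg s h', hwh s h'])
    (by rw [List.prod_append, hpg, hph])
  rwa [List.length_append, hlg, hlh] at this

lemma wordLength_inv_le (hgen : Subgroup.closure (S : Set G) = ⊤)
    (hsym : ∀ s ∈ S, s⁻¹ ∈ S) (g : G) :
    wordLength S g⁻¹ ≤ wordLength S g := by
  obtain ⟨w, hw, hl, hp⟩ := wordLength_exists_min hgen hsym g
  have := wordLength_le (S := S) ((w.map fun y => y⁻¹).reverse)
    (by intro s hs
        rw [List.mem_reverse, List.mem_map] at hs
        obtain ⟨t, ht, rfl⟩ := hs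
        exact hsym t (hw t ht))
    (by rw [← List.prod_inv_reverse, hp])
  rwa [List.length_reverse, List.length_map, hl] at this

lemma wordLength_pow_le (hgen : Subgroup.closure (S : Set G) = ⊤)
    (hsym : ∀ s ∈ S, s⁻¹ ∈ S) (g : G) (k : ℕ) :
    wordLength S (g ^ k) ≤ k * wordLength S g := by
  induction k with
  | zero =>
      simpa using wordLength_le (S := S) [] (by simp) rfl
  | succ k ih =>
      calc wordLength S (g ^ (k + 1)) = wordLength S (g ^ k * g) := by rw [pow_succ]
        _ ≤ wordLength S (g ^ k) + wordLength S g := wordLength_mul_le hgen hsym _ _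
        _ ≤ k * wordLength S g + wordLength S g := by omega
        _ = (k + 1) * wordLength S g := by ring

lemma wordLength_conj_le (hgen : Subgroup.closure (S : Set G) = ⊤)
    (hsym : ∀ s ∈ S, s⁻¹ ∈ S) (t b : G) :
    wordLength S (t⁻¹ * b * t) ≤ wordLength S b + 2 * wordLength S t := by
  calc wordLength S (t⁻¹ * b * t) ≤ wordLength S (t⁻¹ * b) + wordLength S t :=
        wordLength_mul_le hgen hsym _ _
    _ ≤ wordLength S t⁻¹ + wordLength S b + wordLength S t := by
        have := wordLength_mul_le hgen hsym t⁻¹ b; omega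
    _ ≤ wordLength S b + 2 * wordLength S t := by
        have := wordLength_inv_le hgen hsym t; omega

lemma finite_ball (hgen : Subgroup.closure (S : Set G) = ⊤)
    (hsym : ∀ s ∈ S, s⁻¹ ∈ S) (M : ℕ) :
    {g : G | wordLength S g ≤ M}.Finite := by
  have h1 : {l : List ↥S | l.length ≤ M}.Finite := List.finite_length_le _ M
  apply Set.Finite.subset (h1.image (fun l => (l.map Subtype.val).prod))
  intro g hg
  obtain ⟨w, hw, hlen, hprod⟩ := wordLength_exists_min hgen hsym g
  refine ⟨w.attach.map (fun s => (⟨s.1, hw s.1 s.2⟩ : ↥S)), ?_, ?_⟩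
  · simp only [Set.mem_setOf_eq, List.length_map, List.length_attach, hlen]
    exact hg
  · have hmm : (List.map Subtype.val (w.attach.map fun s => (⟨s.1, hw s.1 s.2⟩ : ↥S))) = w := by
      rw [List.map_map]
      exact List.attach_map_subtype_val w
    simpa [hmm] using hprod

lemma tendsto_wordLength_pow (hgen : Subgroup.closure (S : Set G) = ⊤)
    (hsym : ∀ s ∈ S, s⁻¹ ∈ S) {g : G} (hg : ¬ IsOfFinOrder g) :
    Filter.Tendsto (fun t : ℕ => wordLength S (g ^ t)) Filter.atTop Filter.atTop := by
  rw [Filter.tendsto_atTop]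
  intro M
  have hfin : ((fun t : ℕ => g ^ t) ⁻¹' {h : G | wordLength S h ≤ M}).Finite := by
    apply Set.Finite.preimage _ (finite_ball hgen hsym M)
    exact Set.injOn_of_injective (injective_pow_iff_not_isOfFinOrder.mpr hg)
  obtain ⟨N, hN⟩ := hfin.bddAbove
  refine Filter.eventually_atTop.mpr ⟨N + 1, fun t ht => ?_⟩
  by_contra hcon
  have : t ∈ (fun t : ℕ => g ^ t) ⁻¹' {h : G | wordLength S h ≤ M} := by
    simp only [Set.mem_preimage, Set.mem_setOf_eq]; omega
  have := hN this
  omega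

end WordLength


section CycleDecomp

variable {X G : Type*} [Group G] [Fintype X] (A : SelfSimilarGroup X G)

lemma cycLen_eq_of_iff {g : G} {v : List X} {d : ℕ} (hd : 1 ≤ d)
    (h : ∀ t, A.act (g ^ t) v = v ↔ d ∣ t) : cycLen A g v = d := by
  have hmem : cycLen A g v ∈ {k | 1 ≤ k ∧ A.act (g ^ k) v = v} :=
    Nat.sInf_mem ⟨d, hd, (h d).mpr dvd_rfl⟩
  have h1 : cycLen A g v ≤ d := Nat.sInf_le ⟨hd, (h d).mpr dvd_rfl⟩
  have h2 : d ∣ cycLen A g v := (h _).mp hmem.2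
  have := Nat.le_of_dvd hmem.1 h2
  omega

lemma sec_cycLen_pow_dvd {g : G} {v : List X} {t : ℕ} (h : cycLen A g v ∣ t) :
    A.sec (g ^ t) v = (A.sec (g ^ cycLen A g v) v) ^ (t / cycLen A g v) := by
  obtain ⟨q, rfl⟩ := h
  rw [A.sec_pow_fix (act_cycLen_fix A g v) q,
    Nat.mul_div_cancel_left q (by have := one_le_cycLen A g v; omega)]

lemma act_append_fix_iff (g : G) (u w : List X) (t : ℕ) :
    A.act (g ^ t) (u ++ w) = u ++ w ↔
      A.act (g ^ t) u = u ∧ A.act (A.sec (g ^ t) u) w = w := by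
  rw [A.act_append]
  constructor
  · intro h
    have hlen : (A.act (g ^ t) u).length = u.length := A.length_act _ u
    obtain ⟨h1, h2⟩ := List.append_inj h hlen
    exact ⟨h1, h2⟩
  · rintro ⟨h1, h2⟩; rw [h1, h2]

lemma cycLen_append (g : G) (u w : List X) :
    cycLen A g (u ++ w) =
      cycLen A g u * cycLen A (A.sec (g ^ cycLen A g u) u) w := by
  set k := cycLen A g u with hk
  set h := A.sec (g ^ k) u with hh
  set k' := cycLen A h w with hk'
  have hk1 : 1 ≤ k := one_le_cycLen A g u
  have hk'1 : 1 ≤ k' := one_le_cycLen A h w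
  apply cycLen_eq_of_iff A (Nat.one_le_iff_ne_zero.mpr (Nat.mul_ne_zero (by omega) (by omega)))
  intro t
  rw [act_append_fix_iff]
  constructor
  · rintro ⟨h1, h2⟩
    have hdvd : k ∣ t := (act_pow_fix_iff A g u t).mp h1
    rw [sec_cycLen_pow_dvd A hdvd] at h2
    have hdvd' : k' ∣ t / k := (act_pow_fix_iff A h w _).mp h2
    obtain ⟨q, hq⟩ := hdvd
    obtain ⟨q', hq'⟩ := hdvd'
    rw [hq, Nat.mul_div_cancel_left q (by omega)] at hq'
    exact ⟨q', by rw [hq, hq']; ring⟩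
  · rintro ⟨q, rfl⟩
    have hdvd : k ∣ k * k' * q := ⟨k' * q, by ring⟩
    have h1 : A.act (g ^ (k * k' * q)) u = u := (act_pow_fix_iff A g u _).mpr hdvd
    refine ⟨h1, ?_⟩
    have e : k * k' * q / cycLen A g u = k' * q := by
      rw [← hk, mul_assoc, Nat.mul_div_cancel_left _ (show 0 < k by omega)]
    rw [sec_cycLen_pow_dvd A hdvd, e, ← hk, ← hh]
    exact (act_pow_fix_iff A h w _).mpr (by rw [← hk']; exact dvd_mul_right k' q)

lemma sec_cycLen_append (g : G) (u w : List X) :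
    A.sec (g ^ cycLen A g (u ++ w)) (u ++ w) =
      A.sec ((A.sec (g ^ cycLen A g u) u) ^ cycLen A (A.sec (g ^ cycLen A g u) u) w) w := by
  set k := cycLen A g u with hk
  set h := A.sec (g ^ k) u with hh
  set k' := cycLen A h w with hk'
  rw [cycLen_append A g u w, A.sec_append]
  congr 1
  have : k ∣ k * k' := ⟨k', rfl⟩
  rw [← hk, ← hh, ← hk']
  rw [sec_cycLen_pow_dvd A this, Nat.mul_div_cancel_left k' (by have := one_le_cycLen A g u; omega)]

lemma isOfFinOrder_of_isConj {a b : G} (h : IsConj a b) (ha : IsOfFinOrder a) :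
    IsOfFinOrder b := by
  obtain ⟨c, hc⟩ := isConj_iff.mp h
  obtain ⟨n, hn, hpow⟩ := isOfFinOrder_iff_pow_eq_one.mp ha
  refine isOfFinOrder_iff_pow_eq_one.mpr ⟨n, hn, ?_⟩
  rw [← hc, conj_pow, hpow, mul_one, mul_inv_cancel]

lemma isOfFinOrder_sec_cycLen {h : G} (hh : IsOfFinOrder h) (w : List X) :
    IsOfFinOrder (A.sec (h ^ cycLen A h w) w) := by
  set k' := cycLen A h w with hk'
  obtain ⟨N, hN, hpow⟩ := isOfFinOrder_iff_pow_eq_one.mp hh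
  refine isOfFinOrder_iff_pow_eq_one.mpr ⟨N, hN, ?_⟩
  have := A.sec_pow_fix (act_cycLen_fix A h w) N
  rw [← hk'] at this
  rw [← this, show k' * N = N * k' by ring, pow_mul, hpow, one_pow, A.sec_one]

/-- The word map induced by the action of `t` on words of length `n`. -/
def actW (t : G) {n : ℕ} (v : Fin n → X) : Fin n → X :=
  fun i => (A.act t (List.ofFn v)).get
    (Fin.cast ((A.length_act t _).trans List.length_ofFn).symm i)

lemma ofFn_actW (t : G) {n : ℕ} (v : Fin n → X) :
    List.ofFn (actW A t v) = A.act t (List.ofFn v) := by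
  apply List.ext_get
  · rw [List.length_ofFn, A.length_act, List.length_ofFn]
  · intro i h1 h2
    rw [List.get_ofFn]
    rfl

lemma actW_leftInverse (t : G) {n : ℕ} (v : Fin n → X) :
    actW A t⁻¹ (actW A t v) = v := by
  apply List.ofFn_injective
  rw [ofFn_actW, ofFn_actW, A.act_leftInverse]

/-- The equivalence of `X^n` induced by the action of `t`. -/
def actWEquiv (t : G) (n : ℕ) : (Fin n → X) ≃ (Fin n → X) where
  toFun := actW A t
  invFun := actW A t⁻¹
  left_inv v := actW_leftInverse A t v
  right_inv v := by
    have := actW_leftInverse A t⁻¹ v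
    rwa [inv_inv] at this

open Classical in
/-- Conjugation invariance of cycle sums. -/
lemma conj_cycle_sum (p : ℝ) {h b : G} (t : G) (hconj : h = t * b * t⁻¹) (n : ℕ)
    (F : G → ℝ) (hF : ∀ u u' : G, IsConj u u' → F u = F u') :
    ∑ v : Fin n → X, (cycLen A h (List.ofFn v) : ℝ) ^ (-p) *
        F (A.sec (h ^ cycLen A h (List.ofFn v)) (List.ofFn v))
      = ∑ v : Fin n → X, (cycLen A b (List.ofFn v) : ℝ) ^ (-p) *
        F (A.sec (b ^ cycLen A b (List.ofFn v)) (List.ofFn v)) := by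
  rw [← Equiv.sum_comp (actWEquiv A t n)]
  apply Finset.sum_congr rfl
  intro v _
  have hofn : List.ofFn ((actWEquiv A t n) v) = A.act t (List.ofFn v) := ofFn_actW A t v
  set V := List.ofFn v with hV
  set W := A.act t V with hW
  -- powers of h act on W as powers of b act on V
  have hpow : ∀ s : ℕ, h ^ s = t * b ^ s * t⁻¹ := by
    intro s; rw [hconj, conj_pow]
  have hfix : ∀ s : ℕ, A.act (h ^ s) W = W ↔ A.act (b ^ s) V = V := by
    intro s
    rw [hpow s, hW]
    have : A.act (t * b ^ s * t⁻¹) (A.act t V) = A.act t (A.act (b ^ s) V) := by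
      rw [A.act_act, A.act_act]
      congr 1
      group
    rw [this]
    exact ⟨fun hx => A.act_injective t hx, fun hx => by rw [hx]⟩
  have hcyc : cycLen A h W = cycLen A b V := by
    unfold cycLen
    congr 1
    ext s
    simp only [Set.mem_setOf_eq]
    rw [hfix s]
  set k := cycLen A b V with hk
  have hbfix : A.act (b ^ k) V = V := act_cycLen_fix A b V
  -- the section of h^k at W is conjugate to the section of b^k at V
  have hsec : A.sec (h ^ k) W = A.sec t V * A.sec (b ^ k) V * (A.sec t V)⁻¹ := by
    have e1 : h ^ k = t * (b ^ k * t⁻¹) := by rw [hpow k, mul_assoc]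
    rw [e1, A.sec_mul]
    have e2 : A.act (b ^ k * t⁻¹) W = V := by
      rw [A.act_mul, hW, A.act_leftInverse, hbfix]
    rw [e2, A.sec_mul, hW, A.act_leftInverse]
    have e3 : A.sec t⁻¹ W = (A.sec t V)⁻¹ := by
      have : A.sec (t⁻¹ * t) V = A.sec t⁻¹ (A.act t V) * A.sec t V := A.sec_mul t⁻¹ t V
      rw [inv_mul_cancel, A.sec_one] at this
      rw [hW]
      exact eq_inv_of_mul_eq_one_left this.symm
    rw [e3, mul_assoc]
  have hFeq : F (A.sec (h ^ k) W) = F (A.sec (b ^ k) V) := by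
    apply hF
    rw [hsec]
    exact (isConj_iff.mpr ⟨A.sec t V, rfl⟩).symm
  rw [hofn, hcyc, hFeq]

end CycleDecomp


section LevelMatrix

variable {X G : Type*} [Fintype X] [Group G]

open Classical in
/-- The level-`n` Thurston matrix. -/
noncomputable def levelMatrix (A : SelfSimilarGroup X G) (p : ℝ) {m : ℕ} (g : Fin m → G)
    (n : ℕ) : Matrix (Fin m) (Fin m) ℝ :=
  Matrix.of fun i j =>
    ∑ v : Fin n → X,
      (cycLen A (g i) (List.ofFn v) : ℝ) ^ (-p) *
        (if IsConj (A.sec ((g i) ^ (cycLen A (g i) (List.ofFn v))) (List.ofFn v)) (g j)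
          then 1 else 0)

lemma levelMatrix_nonneg (A : SelfSimilarGroup X G) (p : ℝ) {m : ℕ} (g : Fin m → G)
    (n : ℕ) (i j : Fin m) : 0 ≤ levelMatrix A p g n i j := by
  classical
  apply Finset.sum_nonneg
  intro v _
  apply mul_nonneg (Real.rpow_nonneg (by positivity) _)
  split <;> norm_num

lemma levelMatrix_one (A : SelfSimilarGroup X G) (p : ℝ) {m : ℕ} (g : Fin m → G) :
    levelMatrix A p g 1 = thurstonMatrix A p g := by
  classical
  ext i j
  show ∑ v : Fin 1 → X, _ = ∑ x : X, _
  apply Fintype.sum_equiv (Equiv.funUnique (Fin 1) X)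
  intro v
  have hofn : List.ofFn v = [v 0] := by
    rw [List.ofFn_succ]
    simp
  rw [hofn]
  rfl

open Classical in
lemma levelMatrix_succ (A : SelfSimilarGroup X G) (p : ℝ) {m : ℕ} (g : Fin m → G)
    (hinf : ∀ i, ¬ IsOfFinOrder (g i))
    (hnconj : ∀ i j, i ≠ j → ¬ IsConj (g i) (g j))
    (hinv : ∀ (i : Fin m) (x : X),
      IsOfFinOrder (A.sec ((g i) ^ (cycLen A (g i) [x])) [x]) ∨
        ∃ j, IsConj (A.sec ((g i) ^ (cycLen A (g i) [x])) [x]) (g j))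
    (n : ℕ) :
    levelMatrix A p g (n + 1) = (thurstonMatrix A p g) * (levelMatrix A p g n) := by
  ext i l
  rw [Matrix.mul_apply]
  show ∑ w : Fin (n + 1) → X, _ = _
  rw [← Fintype.sum_equiv (Fin.consEquiv fun _ : Fin (n+1) => X)
    (fun q : X × (Fin n → X) =>
      (cycLen A (g i) (List.ofFn (Fin.cons q.1 q.2 : Fin (n+1) → X)) : ℝ) ^ (-p) *
        (if IsConj (A.sec ((g i) ^ (cycLen A (g i) (List.ofFn (Fin.cons q.1 q.2 : Fin (n+1) → X))))
            (List.ofFn (Fin.cons q.1 q.2 : Fin (n+1) → X))) (g l) then 1 else 0)) _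
    (fun q => rfl)]
  rw [Fintype.sum_prod_type]
  have key : ∀ x : X,
      ∑ v : Fin n → X,
        (cycLen A (g i) (List.ofFn (Fin.cons x v : Fin (n+1) → X)) : ℝ) ^ (-p) *
          (if IsConj (A.sec ((g i) ^ (cycLen A (g i) (List.ofFn (Fin.cons x v : Fin (n+1) → X))))
              (List.ofFn (Fin.cons x v : Fin (n+1) → X))) (g l) then 1 else 0)
      = (cycLen A (g i) [x] : ℝ) ^ (-p) *
          ∑ j : Fin m,
            (if IsConj (A.sec ((g i) ^ (cycLen A (g i) [x])) [x]) (g j) then 1 else 0) *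
              levelMatrix A p g n j l := by
    intro x
    set k := cycLen A (g i) [x] with hkdef
    set h := A.sec ((g i) ^ k) [x] with hhdef
    have hterm : ∀ v : Fin n → X,
        (cycLen A (g i) (List.ofFn (Fin.cons x v : Fin (n+1) → X)) : ℝ) ^ (-p) *
          (if IsConj (A.sec ((g i) ^ (cycLen A (g i) (List.ofFn (Fin.cons x v : Fin (n+1) → X))))
              (List.ofFn (Fin.cons x v : Fin (n+1) → X))) (g l) then 1 else 0)
        = (k : ℝ) ^ (-p) * ((cycLen A h (List.ofFn v) : ℝ) ^ (-p) *
            (if IsConj (A.sec (h ^ (cycLen A h (List.ofFn v))) (List.ofFn v)) (g l)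
              then 1 else 0)) := by
      intro v
      have hofn : List.ofFn (Fin.cons x v : Fin (n+1) → X) = [x] ++ List.ofFn v := by
        rw [List.ofFn_succ]
        simp
      rw [hofn, sec_cycLen_append A (g i) [x] (List.ofFn v), cycLen_append A (g i) [x] (List.ofFn v)]
      rw [← hkdef, ← hhdef]
      rw [Nat.cast_mul, Real.mul_rpow (by positivity) (by positivity)]
      ring
    rw [Finset.sum_congr rfl (fun v _ => hterm v), ← Finset.mul_sum]
    congr 1
    -- inner sum evaluation
    rcases hinv i x with hfin | ⟨j0, hj0⟩
    · rw [← hkdef, ← hhdef] at hfin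
      have hzero : ∀ v : Fin n → X,
          (cycLen A h (List.ofFn v) : ℝ) ^ (-p) *
            (if IsConj (A.sec (h ^ (cycLen A h (List.ofFn v))) (List.ofFn v)) (g l)
              then 1 else 0) = 0 := by
        intro v
        have : ¬ IsConj (A.sec (h ^ (cycLen A h (List.ofFn v))) (List.ofFn v)) (g l) := by
          intro hc
          exact hinf l (isOfFinOrder_of_isConj hc (isOfFinOrder_sec_cycLen A hfin _))
        rw [if_neg this, mul_zero]
      have hzero' : ∀ j : Fin m,
          (if IsConj h (g j) then (1:ℝ) else 0) * levelMatrix A p g n j l = 0 := by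
        intro j
        have : ¬ IsConj h (g j) := by
          intro hc
          exact hinf j (isOfFinOrder_of_isConj hc hfin)
        rw [if_neg this, zero_mul]
      rw [Finset.sum_congr rfl (fun v _ => hzero v), Finset.sum_congr rfl (fun j _ => hzero' j)]
      simp
    · rw [← hkdef, ← hhdef] at hj0
      obtain ⟨c, hc⟩ := isConj_iff.mp hj0
      have hconj : h = c⁻¹ * (g j0) * c⁻¹⁻¹ := by
        rw [← hc]; group
      have hLHS : ∑ v : Fin n → X, (cycLen A h (List.ofFn v) : ℝ) ^ (-p) *
            (if IsConj (A.sec (h ^ (cycLen A h (List.ofFn v))) (List.ofFn v)) (g l)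
              then 1 else 0)
          = ∑ v : Fin n → X, (cycLen A (g j0) (List.ofFn v) : ℝ) ^ (-p) *
            (if IsConj (A.sec ((g j0) ^ (cycLen A (g j0) (List.ofFn v))) (List.ofFn v)) (g l)
              then 1 else 0) :=
        conj_cycle_sum A p c⁻¹ hconj n
          (fun u => if IsConj u (g l) then (1:ℝ) else 0)
          (fun u u' huu => by
            by_cases hcase : IsConj u (g l)
            · rw [if_pos hcase, if_pos (huu.symm.trans hcase)]
            · rw [if_neg hcase, if_neg (fun hx => hcase (huu.trans hx))])
      rw [hLHS]
      have hRHS : ∑ j : Fin m,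
          (if IsConj h (g j) then (1:ℝ) else 0) * levelMatrix A p g n j l
          = levelMatrix A p g n j0 l := by
        rw [Finset.sum_eq_single j0]
        · rw [if_pos hj0, one_mul]
        · intro j _ hj
          have : ¬ IsConj h (g j) := by
            intro hx
            exact hnconj j j0 hj (hx.symm.trans hj0)
          rw [if_neg this, zero_mul]
        · intro hx; exact absurd (Finset.mem_univ j0) hx
      rw [hRHS]
      rfl
  rw [Finset.sum_congr rfl (fun x _ => key x)]
  simp_rw [Finset.mul_sum]
  rw [Finset.sum_comm]
  apply Finset.sum_congr rfl
  intro j _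
  rw [thurstonMatrix, Matrix.of_apply, Finset.sum_mul]
  apply Finset.sum_congr rfl
  intro x _
  ring

end LevelMatrix


lemma levelMatrix_eq_pow {X G : Type*} [Fintype X] [Group G] (A : SelfSimilarGroup X G)
    (p : ℝ) {m : ℕ} (g : Fin m → G)
    (hinf : ∀ i, ¬ IsOfFinOrder (g i))
    (hnconj : ∀ i j, i ≠ j → ¬ IsConj (g i) (g j))
    (hinv : ∀ (i : Fin m) (x : X),
      IsOfFinOrder (A.sec ((g i) ^ (cycLen A (g i) [x])) [x]) ∨
        ∃ j, IsConj (A.sec ((g i) ^ (cycLen A (g i) [x])) [x]) (g j)) :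
    ∀ n, 1 ≤ n → levelMatrix A p g n = (thurstonMatrix A p g) ^ n := by
  intro n hn
  induction n with
  | zero => omega
  | succ n ih =>
      rcases Nat.lt_or_ge n 1 with h1 | h1
      · have : n = 0 := by omega
        subst this
        rw [levelMatrix_one, pow_one]
      · rw [levelMatrix_succ A p g hinf hnconj hinv n, ih h1, ← pow_succ']

section EtaExtract

open Filter

lemma eta_extract {X G : Type*} [Fintype X] [Group G] (A : SelfSimilarGroup X G)
    (S : Finset G) {p : ℝ} (hp : 1 ≤ p) {n : ℕ}
    (h : eta A S p n < 1) :
    ∃ c : ℝ, 0 ≤ c ∧ c < 1 ∧ ∃ M : ℕ, 1 ≤ M ∧ ∀ g : G, M ≤ wordLength S g →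
      ∑ v : Fin n → X, (wordLength S (A.sec g (List.ofFn v)) : ℝ) ^ p
        ≤ (c * wordLength S g) ^ p := by
  have hp0 : p ≠ 0 := by positivity
  obtain ⟨a, ha1, ha2⟩ := exists_between h
  have hatop : a ≠ ⊤ := ne_top_of_lt (lt_of_lt_of_le ha2 le_top)
  have hev : ∀ᶠ g in comap (wordLength S) atTop,
      (∑ v : Fin n → X, (wordLength S (A.sec g (List.ofFn v)) : ℝ≥0∞) ^ p) ^ (1 / p)
        / (wordLength S g : ℝ≥0∞) < a :=
    Filter.eventually_lt_of_limsup_lt ha1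
  rw [eventually_comap] at hev
  obtain ⟨M, hM⟩ := eventually_atTop.mp hev
  refine ⟨a.toReal, ENNReal.toReal_nonneg, ?_, max M 1, le_max_right _ _, ?_⟩
  · have := (ENNReal.toReal_lt_toReal hatop ENNReal.one_ne_top).mpr ha2
    simpa using this
  · intro g hg
    have hwl1 : 1 ≤ wordLength S g := le_trans (le_max_right M 1) hg
    have hlt := hM (wordLength S g) (le_trans (le_max_left M 1) hg) g rfl
    set SgE : ℝ≥0∞ := ∑ v : Fin n → X, (wordLength S (A.sec g (List.ofFn v)) : ℝ≥0∞) ^ p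
      with hSgE
    have hW0 : (wordLength S g : ℝ≥0∞) ≠ 0 := by
      simp only [ne_eq, Nat.cast_eq_zero]
      omega
    have hWtop : (wordLength S g : ℝ≥0∞) ≠ ⊤ := ENNReal.natCast_ne_top _
    have hlt2 : SgE ^ (1 / p) ≤ a * (wordLength S g : ℝ≥0∞) :=
      le_of_lt ((ENNReal.div_lt_iff (Or.inl hW0) (Or.inl hWtop)).mp hlt)
    have hkey : SgE ≤ (a * (wordLength S g : ℝ≥0∞)) ^ p := by
      have := ENNReal.rpow_le_rpow hlt2 (by positivity : (0:ℝ) ≤ p)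
      rwa [← ENNReal.rpow_mul, one_div, inv_mul_cancel₀ hp0, ENNReal.rpow_one] at this
    have hRtop : (a * (wordLength S g : ℝ≥0∞)) ^ p ≠ ⊤ := by
      apply ENNReal.rpow_ne_top_of_nonneg (by positivity)
      exact ENNReal.mul_ne_top hatop hWtop
    have := ENNReal.toReal_mono hRtop hkey
    have hLHS : SgE.toReal
        = ∑ v : Fin n → X, (wordLength S (A.sec g (List.ofFn v)) : ℝ) ^ p := by
      rw [hSgE, ENNReal.toReal_sum]
      · apply Finset.sum_congr rfl
        intro v _
        rw [← ENNReal.toReal_rpow, ENNReal.toReal_natCast]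
      · intro v _
        exact ENNReal.rpow_ne_top_of_nonneg (by positivity) (ENNReal.natCast_ne_top _)
    have hRHS : ((a * (wordLength S g : ℝ≥0∞)) ^ p).toReal
        = (a.toReal * (wordLength S g : ℝ)) ^ p := by
      rw [← ENNReal.toReal_rpow, ENNReal.toReal_mul, ENNReal.toReal_natCast]
    rw [hLHS, hRHS] at this
    exact this

end EtaExtract


section Master

open Filter

open Classical in
/-- The master inequality: the level-`n₀` matrix applied to the vector of `p`-th powers
of word lengths of powers is controlled by `c` times the word length plus a constant. -/
lemma master_inequality {X G : Type*} [Fintype X] [Group G] (A : SelfSimilarGroup X G)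
    (S : Finset G) (hgen : Subgroup.closure (S : Set G) = ⊤) (hsym : ∀ s ∈ S, s⁻¹ ∈ S)
    {p : ℝ} (hp : 1 ≤ p) {m : ℕ} (g : Fin m → G)
    (hinf : ∀ i, ¬ IsOfFinOrder (g i))
    (hnconj : ∀ i j, i ≠ j → ¬ IsConj (g i) (g j))
    {n₀ : ℕ} {c : ℝ} (hc0 : 0 ≤ c) {M : ℕ}
    (hM : ∀ gg : G, M ≤ wordLength S gg →
      ∑ v : Fin n₀ → X, (wordLength S (A.sec gg (List.ofFn v)) : ℝ) ^ p
        ≤ (c * wordLength S gg) ^ p) :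
    ∃ D : ℝ, 0 ≤ D ∧ ∃ q₁ : ℕ, ∀ i : Fin m, ∀ q, q₁ ≤ q →
      ∑ j, levelMatrix A p g n₀ i j *
          (wordLength S ((g j) ^ ((Fintype.card (Fin n₀ → X)).factorial * q)) : ℝ) ^ p
        ≤ (c * (wordLength S ((g i) ^ ((Fintype.card (Fin n₀ → X)).factorial * q)) : ℝ)
            + D) ^ p := by
  have hp0 : (0:ℝ) < p := by linarith
  set K := (Fintype.card (Fin n₀ → X)).factorial with hKdef
  have hK1 : 1 ≤ K := Nat.one_le_iff_ne_zero.mpr (Nat.factorial_ne_zero _)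
  -- cycle lengths divide K
  have hkdvd : ∀ (i : Fin m) (v : Fin n₀ → X), cycLen A (g i) (List.ofFn v) ∣ K := by
    intro i v
    have h1 := cycLen_le_card A (g i) (List.ofFn v)
    have h2 : Fintype.card (Fin (List.ofFn v).length → X) = Fintype.card (Fin n₀ → X) := by
      simp [Fintype.card_fun]
    rw [h2] at h1
    exact Nat.dvd_factorial (one_le_cycLen A _ _) h1
  -- common threshold for the eta bound
  have hev : ∀ᶠ q in Filter.atTop, ∀ i : Fin m,
      M ≤ wordLength S ((g i) ^ (K * q)) := by
    rw [Filter.eventually_all]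
    intro i
    have h1 := tendsto_wordLength_pow hgen hsym (hinf i)
    have h2 : Filter.Tendsto (fun q : ℕ => K * q) Filter.atTop Filter.atTop := by
      apply Filter.tendsto_atTop.mpr
      intro b
      refine Filter.eventually_atTop.mpr ⟨b, fun q hq => ?_⟩
      calc b ≤ q := hq
        _ ≤ K * q := Nat.le_mul_of_pos_left q (by omega)
    exact (h1.comp h2).eventually_ge_atTop M
  obtain ⟨q₁, hq₁⟩ := Filter.eventually_atTop.mp hev
  -- per-word constants
  have hDv : ∀ (i : Fin m) (v : Fin n₀ → X), ∃ Dv : ℝ, 0 ≤ Dv ∧ ∀ q : ℕ,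
      (cycLen A (g i) (List.ofFn v) : ℝ) ^ (-p) *
        (∑ j, (if IsConj (A.sec ((g i) ^ cycLen A (g i) (List.ofFn v)) (List.ofFn v)) (g j)
            then (1:ℝ) else 0) * (wordLength S ((g j) ^ (K * q)) : ℝ) ^ p)
      ≤ ((wordLength S (A.sec ((g i) ^ (K * q)) (List.ofFn v)) : ℝ) + Dv) ^ p := by
    intro i v
    set k := cycLen A (g i) (List.ofFn v) with hkdef2
    set h := A.sec ((g i) ^ k) (List.ofFn v) with hhdef
    have hk1 : 1 ≤ k := one_le_cycLen A _ _
    by_cases hcj : ∃ j, IsConj h (g j)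
    · obtain ⟨j0, hj0⟩ := hcj
      obtain ⟨cc, hcc⟩ := isConj_iff.mp hj0
      refine ⟨2 * wordLength S cc⁻¹, by positivity, fun q => ?_⟩
      have hsum : ∑ j, (if IsConj h (g j) then (1:ℝ) else 0) *
          (wordLength S ((g j) ^ (K * q)) : ℝ) ^ p
          = (wordLength S ((g j0) ^ (K * q)) : ℝ) ^ p := by
        rw [Finset.sum_eq_single j0]
        · rw [if_pos hj0, one_mul]
        · intro j _ hj
          rw [if_neg (fun hx => hnconj j j0 hj (hx.symm.trans hj0)), zero_mul]
        · intro hx; exact absurd (Finset.mem_univ j0) hx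
      rw [hsum]
      have hdvd : k ∣ K * q := Dvd.dvd.mul_right (hkdvd i v) q
      have hsec : A.sec ((g i) ^ (K * q)) (List.ofFn v) = h ^ (K * q / k) := by
        rw [sec_cycLen_pow_dvd A (by rw [← hkdef2]; exact hdvd), ← hkdef2, ← hhdef]
      -- natural-number chain
      have h1 : wordLength S ((g j0) ^ (K * q)) ≤ k * wordLength S ((g j0) ^ (K * q / k)) := by
        have he : (g j0) ^ (K * q) = ((g j0) ^ (K * q / k)) ^ k := by
          rw [← pow_mul, Nat.div_mul_cancel hdvd]
        rw [he]
        have := wordLength_pow_le hgen hsym ((g j0) ^ (K * q / k)) k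
        omega
      have h2 : wordLength S ((g j0) ^ (K * q / k)) ≤
          wordLength S (h ^ (K * q / k)) + 2 * wordLength S cc⁻¹ := by
        have he : (g j0) ^ (K * q / k) = (cc⁻¹)⁻¹ * h ^ (K * q / k) * cc⁻¹ := by
          rw [← hcc, conj_pow]; group
        rw [he]
        exact wordLength_conj_le hgen hsym cc⁻¹ _
      -- real chain
      have hchain : (wordLength S ((g j0) ^ (K * q)) : ℝ) / k ≤
          (wordLength S (A.sec ((g i) ^ (K * q)) (List.ofFn v)) : ℝ) + 2 * wordLength S cc⁻¹ := by
        rw [hsec, div_le_iff₀ (by positivity : (0:ℝ) < (k:ℝ))]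
        have hnat : wordLength S ((g j0) ^ (K * q)) ≤
            k * (wordLength S (h ^ (K * q / k)) + 2 * wordLength S cc⁻¹) := by
          calc wordLength S ((g j0) ^ (K * q)) ≤ k * wordLength S ((g j0) ^ (K * q / k)) := h1
            _ ≤ k * (wordLength S (h ^ (K * q / k)) + 2 * wordLength S cc⁻¹) :=
                Nat.mul_le_mul_left k h2
        calc (wordLength S ((g j0) ^ (K * q)) : ℝ)
            ≤ (k * (wordLength S (h ^ (K * q / k)) + 2 * wordLength S cc⁻¹) : ℕ) := by
              exact_mod_cast Nat.cast_le.mpr hnat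
          _ = ((wordLength S (h ^ (K * q / k)) : ℝ) + 2 * wordLength S cc⁻¹) * k := by
              push_cast; ring
      -- conclude via rpow monotonicity
      have hFk : (k : ℝ) ^ (-p) * (wordLength S ((g j0) ^ (K * q)) : ℝ) ^ p
          = ((wordLength S ((g j0) ^ (K * q)) : ℝ) / k) ^ p := by
        rw [Real.div_rpow (by positivity) (by positivity), Real.rpow_neg (by positivity)]
        ring
      rw [hFk]
      exact Real.rpow_le_rpow (by positivity) hchain (le_of_lt hp0)
    · refine ⟨0, le_refl _, fun q => ?_⟩
      have hz : ∑ j, (if IsConj h (g j) then (1:ℝ) else 0) *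
          (wordLength S ((g j) ^ (K * q)) : ℝ) ^ p = 0 := by
        apply Finset.sum_eq_zero
        intro j _
        rw [if_neg (fun hx => hcj ⟨j, hx⟩), zero_mul]
      rw [hz, mul_zero]
      positivity
  choose Dv hDv0 hDvIneq using hDv
  refine ⟨∑ i, (∑ v : Fin n₀ → X, (Dv i v) ^ p) ^ (1/p), ?_, q₁, ?_⟩
  · apply Finset.sum_nonneg
    intro i _
    apply Real.rpow_nonneg
    apply Finset.sum_nonneg
    intro v _
    exact Real.rpow_nonneg (hDv0 i v) p
  · intro i q hq
    have hMi := hq₁ q hq i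
    set Fi : ℝ := (wordLength S ((g i) ^ (K * q)) : ℝ) with hFidef
    -- abbreviations
    set α : (Fin n₀ → X) → ℝ :=
      fun v => (wordLength S (A.sec ((g i) ^ (K * q)) (List.ofFn v)) : ℝ) with hαdef
    have hα0 : ∀ v, 0 ≤ α v := fun v => Nat.cast_nonneg _
    -- swap the sums
    have hswap : ∑ j, levelMatrix A p g n₀ i j *
        (wordLength S ((g j) ^ (K * q)) : ℝ) ^ p
        = ∑ v : Fin n₀ → X, (cycLen A (g i) (List.ofFn v) : ℝ) ^ (-p) *
            (∑ j, (if IsConj (A.sec ((g i) ^ cycLen A (g i) (List.ofFn v)) (List.ofFn v)) (g j)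
              then (1:ℝ) else 0) * (wordLength S ((g j) ^ (K * q)) : ℝ) ^ p) := by
      simp only [levelMatrix, Matrix.of_apply, Finset.sum_mul]
      rw [Finset.sum_comm]
      apply Finset.sum_congr rfl
      intro v _
      rw [Finset.mul_sum]
      apply Finset.sum_congr rfl
      intro j _
      ring
    rw [hswap]
    have hstep1 : ∑ v : Fin n₀ → X, (cycLen A (g i) (List.ofFn v) : ℝ) ^ (-p) *
          (∑ j, (if IsConj (A.sec ((g i) ^ cycLen A (g i) (List.ofFn v)) (List.ofFn v)) (g j)
            then (1:ℝ) else 0) * (wordLength S ((g j) ^ (K * q)) : ℝ) ^ p)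
        ≤ ∑ v : Fin n₀ → X, (α v + Dv i v) ^ p :=
      Finset.sum_le_sum (fun v _ => hDvIneq i v q)
    refine le_trans hstep1 ?_
    -- Minkowski
    have hαsum : ∑ v : Fin n₀ → X, (α v) ^ p ≤ (c * Fi) ^ p := hM _ hMi
    have hmink := Real.Lp_add_le_of_nonneg (s := (Finset.univ : Finset (Fin n₀ → X)))
      (f := α) (g := fun v => Dv i v) hp (fun v _ => hα0 v) (fun v _ => hDv0 i v)
    have hcF0 : (0:ℝ) ≤ c * Fi := by positivity
    have hs2 : (∑ v : Fin n₀ → X, (α v) ^ p) ^ (1/p) ≤ c * Fi := by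
      calc (∑ v : Fin n₀ → X, (α v) ^ p) ^ (1/p)
          ≤ ((c * Fi) ^ p) ^ (1/p) := by
            apply Real.rpow_le_rpow _ hαsum (by positivity)
            apply Finset.sum_nonneg
            intro v _
            exact Real.rpow_nonneg (hα0 v) p
        _ = c * Fi := by
            rw [← Real.rpow_mul hcF0, mul_one_div, div_self (ne_of_gt hp0), Real.rpow_one]
    have hs3 : (∑ v : Fin n₀ → X, (Dv i v) ^ p) ^ (1/p)
        ≤ ∑ i', (∑ v : Fin n₀ → X, (Dv i' v) ^ p) ^ (1/p) := by
      apply Finset.single_le_sum (f := fun i' => (∑ v : Fin n₀ → X, (Dv i' v) ^ p) ^ (1/p))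
      · intro i' _
        apply Real.rpow_nonneg
        apply Finset.sum_nonneg
        intro v _
        exact Real.rpow_nonneg (hDv0 i' v) p
      · exact Finset.mem_univ i
    have hroot : (∑ v : Fin n₀ → X, (α v + Dv i v) ^ p) ^ (1/p)
        ≤ c * Fi + ∑ i', (∑ v : Fin n₀ → X, (Dv i' v) ^ p) ^ (1/p) :=
      le_trans hmink (add_le_add hs2 hs3)
    have hsumnn : (0:ℝ) ≤ ∑ v : Fin n₀ → X, (α v + Dv i v) ^ p := by
      apply Finset.sum_nonneg
      intro v _
      exact Real.rpow_nonneg (add_nonneg (hα0 v) (hDv0 i v)) p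
    have := Real.rpow_le_rpow (Real.rpow_nonneg hsumnn _) hroot (le_of_lt hp0)
    rwa [← Real.rpow_mul hsumnn, one_div_mul_cancel (ne_of_gt hp0),
      Real.rpow_one] at this

end Master


section SubLemma

open Filter

/-- Extraction of a nonnegative sub-eigenvector-type inequality from the master estimate. -/
lemma sub_vector {m : ℕ} (B : Matrix (Fin m) (Fin m) ℝ) (hB : ∀ i j, 0 ≤ B i j)
    {p c D : ℝ} (hp0 : 0 < p) (hc0 : 0 ≤ c) (hD0 : 0 ≤ D)
    (F : Fin m → ℕ → ℝ) (hF0 : ∀ j q, 0 ≤ F j q)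
    (hFtend : ∀ j, Tendsto (fun q => F j q) atTop atTop)
    {q₁ : ℕ} (hmaster : ∀ i, ∀ q, q₁ ≤ q → ∑ j, B i j * (F j q) ^ p ≤ (c * F i q + D) ^ p)
    (J : Finset (Fin m)) (hJ : J.Nonempty) :
    ∃ U : Fin m → ℝ, (∀ j, 0 ≤ U j) ∧ (∃ j ∈ J, 0 < U j) ∧
      ∀ i ∈ J, ∑ j ∈ J, B i j * U j ≤ c ^ p * U i := by
  classical
  obtain ⟨j0, hj0⟩ := hJ
  set φ : ℕ → ℝ := fun q => J.sup' ⟨j0, hj0⟩ (fun j => F j q) with hφdef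
  have hφge : ∀ q, ∀ j ∈ J, F j q ≤ φ q := fun q j hj => Finset.le_sup' (fun j => F j q) hj
  have hφtend : Tendsto φ atTop atTop :=
    tendsto_atTop_mono (fun q => hφge q j0 hj0) (hFtend j0)
  obtain ⟨q₂, hq₂⟩ := eventually_atTop.mp (hφtend.eventually_ge_atTop 1)
  set Q := max q₁ q₂ with hQdef
  set w : ℕ → Fin m → ℝ := fun q j => if j ∈ J then F j q / φ q else 0 with hwdef
  have hφ1 : ∀ r : ℕ, 1 ≤ φ (r + Q) :=
    fun r => hq₂ _ (le_trans (le_max_right _ _) (Nat.le_add_left _ r))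
  have hwmem : ∀ r : ℕ, w (r + Q) ∈ Set.Icc (0 : Fin m → ℝ) 1 := by
    intro r
    have h1 := hφ1 r
    constructor
    · intro j
      simp only [hwdef, Pi.zero_apply]
      split
      · have := hF0 j (r + Q); positivity
      · exact le_refl 0
    · intro j
      simp only [hwdef, Pi.one_apply]
      split
      case isTrue hj =>
        rw [div_le_one (by linarith)]
        exact hφge _ j hj
      case isFalse => exact zero_le_one
  obtain ⟨u, hu, σ, hσmono, hσtend⟩ :=
    (isCompact_Icc (a := (0 : Fin m → ℝ)) (b := 1)).tendsto_subseq hwmem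
  set t : ℕ → ℕ := fun s => σ s + Q with htdef
  have htq₁ : ∀ s, q₁ ≤ t s := fun s => le_trans (le_max_left _ _) (Nat.le_add_left _ _)
  have htq₂ : ∀ s, q₂ ≤ t s := fun s => le_trans (le_max_right _ _) (Nat.le_add_left _ _)
  have hφpos : ∀ s, (0:ℝ) < φ (t s) := fun s => lt_of_lt_of_le zero_lt_one (hq₂ _ (htq₂ s))
  have hucoord : ∀ j, Tendsto (fun s => w (t s) j) atTop (𝓝 (u j)) := by
    intro j
    have := tendsto_pi_nhds.mp hσtend j
    exact this
  have hu0 : ∀ j, 0 ≤ u j := fun j => hu.1 j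
  have httend : Tendsto t atTop atTop := by
    apply tendsto_atTop_mono (fun s => ?_) tendsto_id
    calc (id s : ℕ) = s := rfl
      _ ≤ σ s := hσmono.le_apply
      _ ≤ σ s + Q := Nat.le_add_right _ _
  have hφttend : Tendsto (fun s => φ (t s)) atTop atTop := hφtend.comp httend
  -- Claim A : some coordinate of u on J is at least 1
  have hclaimA : ∃ j ∈ J, 1 ≤ u j := by
    by_contra hcon
    push_neg at hcon
    set β : ℝ := J.sup' ⟨j0, hj0⟩ (fun j => (u j + 1) / 2) with hβdef
    have hβlt : β < 1 := by
      rw [hβdef]; refine (Finset.sup'_lt_iff ..).mpr ?_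
      intro j hj
      have := hcon j hj
      linarith
    have hev : ∀ j ∈ J, ∀ᶠ s in atTop, w (t s) j < β := by
      intro j hj
      apply (hucoord j).eventually_lt_const
      have h1 := hcon j hj
      have h2 : (u j + 1) / 2 ≤ β := Finset.le_sup' (fun j => (u j + 1) / 2) hj
      linarith
    have hev2 : ∀ᶠ s in atTop, ∀ j ∈ J, w (t s) j < β :=
      (J.finite_toSet.eventually_all).mpr hev
    obtain ⟨s, hs⟩ := hev2.exists
    obtain ⟨jm, hjm, hjmeq⟩ := Finset.exists_mem_eq_sup' ⟨j0, hj0⟩ (fun j => F j (t s))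
    have hw1 : w (t s) jm = 1 := by
      simp only [hwdef, if_pos hjm]
      rw [← hjmeq]
      exact div_self (ne_of_gt (hφpos s))
    have := hs jm hjm
    rw [hw1] at this
    linarith
  -- Claim B : the limit inequality
  have hclaimB : ∀ i ∈ J, ∑ j ∈ J, B i j * (u j) ^ p ≤ (c * u i) ^ p := by
    intro i hi
    have hineq : ∀ s : ℕ,
        ∑ j ∈ J, B i j * (w (t s) j) ^ p ≤ (c * w (t s) i + D / φ (t s)) ^ p := by
      intro s
      have hsub : ∑ j ∈ J, B i j * (F j (t s)) ^ p ≤ ∑ j, B i j * (F j (t s)) ^ p := by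
        apply Finset.sum_le_sum_of_subset_of_nonneg (Finset.subset_univ J)
        intro j _ _
        exact mul_nonneg (hB i j) (Real.rpow_nonneg (hF0 j _) p)
      have hm := le_trans hsub (hmaster i (t s) (htq₁ s))
      have hφp : (0:ℝ) < (φ (t s)) ^ p := Real.rpow_pos_of_pos (hφpos s) p
      have key : ∑ j ∈ J, B i j * (w (t s) j) ^ p
          = (∑ j ∈ J, B i j * (F j (t s)) ^ p) / (φ (t s)) ^ p := by
        rw [Finset.sum_div]
        apply Finset.sum_congr rfl
        intro j hj
        rw [hwdef]
        simp only [if_pos hj]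
        rw [Real.div_rpow (hF0 j _) (le_of_lt (hφpos s))]
        ring
      have key2 : (c * w (t s) i + D / φ (t s)) ^ p
          = ((c * F i (t s) + D) ^ p) / (φ (t s)) ^ p := by
        rw [← Real.div_rpow (add_nonneg (mul_nonneg hc0 (hF0 i _)) hD0)
          (le_of_lt (hφpos s))]
        congr 1
        rw [hwdef]
        simp only [if_pos hi]
        field_simp
      rw [key, key2]
      exact (div_le_div_iff_of_pos_right hφp).mpr hm
    have hLHS : Tendsto (fun s => ∑ j ∈ J, B i j * (w (t s) j) ^ p) atTop
        (𝓝 (∑ j ∈ J, B i j * (u j) ^ p)) := by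
      apply tendsto_finset_sum
      intro j _
      exact ((hucoord j).rpow_const (Or.inr (le_of_lt hp0))).const_mul (B i j)
    have hDφ : Tendsto (fun s => D / φ (t s)) atTop (𝓝 0) :=
      tendsto_const_nhds.div_atTop hφttend
    have hRHS : Tendsto (fun s => (c * w (t s) i + D / φ (t s)) ^ p) atTop
        (𝓝 ((c * u i) ^ p)) := by
      have h1 : Tendsto (fun s => c * w (t s) i + D / φ (t s)) atTop (𝓝 (c * u i + 0)) :=
        ((hucoord i).const_mul c).add hDφ
      rw [add_zero] at h1
      exact h1.rpow_const (Or.inr (le_of_lt hp0))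
    exact le_of_tendsto_of_tendsto' hLHS hRHS hineq
  refine ⟨fun j => (u j) ^ p, fun j => Real.rpow_nonneg (hu0 j) p, ?_, ?_⟩
  · obtain ⟨jA, hjA, hjA1⟩ := hclaimA
    exact ⟨jA, hjA, Real.rpow_pos_of_pos (by linarith) p⟩
  · intro i hi
    have := hclaimB i hi
    rwa [Real.mul_rpow hc0 (hu0 i)] at this

end SubLemma


section PF

/-- Perron-Frobenius type induction: if every nonempty subset carries a nonnegative
sub-eigenvector with a positive coordinate, the spectral radius is at most `ρ`. -/
lemma pf_induction {m : ℕ} (B : Matrix (Fin m) (Fin m) ℝ) (hB : ∀ i j, 0 ≤ B i j)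
    {ρ : ℝ}
    (hsub : ∀ J : Finset (Fin m), J.Nonempty → ∃ U : Fin m → ℝ, (∀ j, 0 ≤ U j) ∧
      (∃ j ∈ J, 0 < U j) ∧ ∀ i ∈ J, ∑ j ∈ J, B i j * U j ≤ ρ * U i) :
    ∀ J : Finset (Fin m), ∀ (z : ℂ) (w : Fin m → ℂ),
      (∀ j, j ∉ J → w j = 0) → w ≠ 0 →
      (∀ i ∈ J, ∑ j ∈ J, (B i j : ℂ) * w j = z * w i) → ‖z‖ ≤ ρ := by
  classical
  intro J
  induction J using Finset.strongInduction with
  | _ J ih =>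
    intro z w hsupp hw0 heig
    obtain ⟨jw, hjw⟩ := Function.ne_iff.mp hw0
    have hjwJ : jw ∈ J := by
      by_contra hx
      exact hjw (hsupp jw hx)
    obtain ⟨U, hU0, ⟨jp, hjpJ, hjp⟩, hUineq⟩ := hsub J ⟨jw, hjwJ⟩
    set Jp := J.filter (fun j => 0 < U j) with hJpdef
    have hJpsub : Jp ⊆ J := Finset.filter_subset _ _
    have hJpne : Jp.Nonempty := ⟨jp, Finset.mem_filter.mpr ⟨hjpJ, hjp⟩⟩
    set J0 := J \ Jp with hJ0def
    have hUzero : ∀ i ∈ J0, U i = 0 := by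
      intro i hi
      rw [hJ0def, Finset.mem_sdiff, hJpdef, Finset.mem_filter] at hi
      obtain ⟨hiJ, hnot⟩ := hi
      have h1 : ¬ 0 < U i := fun hx => hnot ⟨hiJ, hx⟩
      have h2 := hU0 i
      linarith
    have hzero_block : ∀ i ∈ J0, ∀ j ∈ Jp, B i j = 0 := by
      intro i hi j hj
      have hiJ : i ∈ J := (Finset.mem_sdiff.mp hi).1
      have hsum := hUineq i hiJ
      rw [hUzero i hi, mul_zero] at hsum
      have hterms : ∀ j ∈ J, 0 ≤ B i j * U j :=
        fun j _ => mul_nonneg (hB i j) (hU0 j)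
      have hall := (Finset.sum_eq_zero_iff_of_nonneg hterms).mp
        (le_antisymm hsum (Finset.sum_nonneg hterms))
      have hBU := hall j (hJpsub hj)
      have hUj : 0 < U j := (Finset.mem_filter.mp hj).2
      rcases mul_eq_zero.mp hBU with h | h
      · exact h
      · exact absurd h (ne_of_gt hUj)
    by_cases hcase : ∃ i ∈ J0, w i ≠ 0
    · -- recurse on the strictly smaller support J0
      obtain ⟨i0, hi0, hwi0⟩ := hcase
      set w' : Fin m → ℂ := fun j => if j ∈ J0 then w j else 0 with hw'def
      have hJ0ss : J0 ⊂ J := Finset.sdiff_ssubset hJpsub hJpne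
      apply ih J0 hJ0ss z w'
      · intro j hj; rw [hw'def]; exact if_neg hj
      · intro hx
        have hcf := congrFun hx i0
        rw [hw'def] at hcf
        simp only [if_pos hi0] at hcf
        exact hwi0 hcf
      · intro i hiJ0
        have hiJ : i ∈ J := (Finset.mem_sdiff.mp hiJ0).1
        have heq := heig i hiJ
        have hsplit : ∑ j ∈ J0, (B i j : ℂ) * w j + ∑ j ∈ Jp, (B i j : ℂ) * w j
            = ∑ j ∈ J, (B i j : ℂ) * w j := by
          rw [hJ0def]
          exact Finset.sum_sdiff hJpsub
        have hJp0 : ∑ j ∈ Jp, (B i j : ℂ) * w j = 0 := by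
          apply Finset.sum_eq_zero
          intro j hj
          rw [hzero_block i hiJ0 j hj]
          simp
        have hmain : ∑ j ∈ J0, (B i j : ℂ) * w j = z * w i := by
          rw [← heq, ← hsplit, hJp0, add_zero]
        calc ∑ j ∈ J0, (B i j : ℂ) * w' j = ∑ j ∈ J0, (B i j : ℂ) * w j := by
              apply Finset.sum_congr rfl
              intro j hj
              rw [hw'def]
              simp only [if_pos hj]
          _ = z * w i := hmain
          _ = z * w' i := by rw [hw'def]; simp only [if_pos hiJ0]
    · -- direct estimate on Jp
      push_neg at hcase
      obtain ⟨js, hjs, hjsmax⟩ :=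
        Finset.exists_max_image Jp (fun j => ‖w j‖ / U j) hJpne
      set r : ℝ := ‖w js‖ / U js with hrdef
      have hUjs : 0 < U js := (Finset.mem_filter.mp hjs).2
      have hjsJ : js ∈ J := hJpsub hjs
      have hjwJp : jw ∈ Jp := by
        by_contra hx
        exact hjw (hcase jw (Finset.mem_sdiff.mpr ⟨hjwJ, hx⟩))
      have hr0 : 0 < r := by
        have h1 : 0 < ‖w jw‖ := by
          apply norm_pos_iff.mpr
          simpa using hjw
        have hUjw : 0 < U jw := (Finset.mem_filter.mp hjwJp).2
        have h2 := hjsmax jw hjwJp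
        calc (0:ℝ) < ‖w jw‖ / U jw := div_pos h1 hUjw
          _ ≤ r := h2
      have hwle : ∀ j ∈ Jp, ‖w j‖ ≤ r * U j := by
        intro j hj
        have hUj : 0 < U j := (Finset.mem_filter.mp hj).2
        have h2 := hjsmax j hj
        rw [div_le_iff₀ hUj] at h2
        linarith
      have heq := heig js hjsJ
      have habs : ‖z‖ * (r * U js) ≤ ρ * (r * U js) := by
        have hwjs : ‖w js‖ = r * U js := by
          rw [hrdef, div_mul_cancel₀]
          exact ne_of_gt hUjs
        calc ‖z‖ * (r * U js) = ‖z‖ * ‖w js‖ := by rw [hwjs]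
          _ = ‖z * w js‖ := (norm_mul z (w js)).symm
          _ = ‖∑ j ∈ J, (B js j : ℂ) * w j‖ := by rw [heq]
          _ ≤ ∑ j ∈ J, ‖(B js j : ℂ) * w j‖ :=
              norm_sum_le _ _
          _ = ∑ j ∈ J, B js j * ‖w j‖ := by
              apply Finset.sum_congr rfl
              intro j _
              rw [norm_mul, Complex.norm_real, Real.norm_eq_abs, abs_of_nonneg (hB js j)]
          _ = ∑ j ∈ Jp, B js j * ‖w j‖ := by
              rw [← Finset.sum_sdiff hJpsub]
              have hz : ∑ j ∈ J \ Jp, B js j * ‖w j‖ = 0 := by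
                apply Finset.sum_eq_zero
                intro j hj
                rw [hcase j hj]
                simp
              rw [hz, zero_add]
          _ ≤ ∑ j ∈ Jp, B js j * (r * U j) := by
              apply Finset.sum_le_sum
              intro j hj
              exact mul_le_mul_of_nonneg_left (hwle j hj) (hB js j)
          _ ≤ ∑ j ∈ J, B js j * (r * U j) := by
              apply Finset.sum_le_sum_of_subset_of_nonneg hJpsub
              intro j _ _
              exact mul_nonneg (hB js j) (mul_nonneg (le_of_lt hr0) (hU0 j))
          _ = r * ∑ j ∈ J, B js j * U j := by
              rw [Finset.mul_sum]
              apply Finset.sum_congr rfl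
              intro j _
              ring
          _ ≤ r * (ρ * U js) := mul_le_mul_of_nonneg_left (hUineq js hjsJ) (le_of_lt hr0)
          _ = ρ * (r * U js) := by ring
      exact le_of_mul_le_mul_right habs (mul_pos hr0 hUjs)

lemma map_pow_complex {m : ℕ} (M : Matrix (Fin m) (Fin m) ℝ) (N : ℕ) :
    (M ^ N).map (fun x : ℝ => (x:ℂ)) = (M.map (fun x : ℝ => (x:ℂ))) ^ N := by
  have hco : (fun x : ℝ => (x:ℂ)) = ⇑Complex.ofRealHom := rfl
  induction N with
  | zero =>
      rw [pow_zero, pow_zero, hco, Matrix.map_one _ (map_zero _) (map_one _)]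
  | succ N ihN =>
      rw [pow_succ, pow_succ, ← ihN, hco, Matrix.map_mul]

end PF

/-- Theorem 4.8. Let `g₁,…,g_m` be pairwise non-conjugate elements of
infinite order spanning a `T_p`-invariant subspace (the section along each first-level cycle
has finite order or is conjugate to some `g_j`). If `η_{p,n₀} < 1` for some `n₀ ≥ 1`, then
the spectral radius of the Thurston matrix is `< 1`: every complex eigenvalue has
modulus `< 1`. -/
theorem thurston_spectral_radius_lt_one {X G : Type*} [Fintype X] [Nonempty X] [Group G]
    (A : SelfSimilarGroup X G) (S : Finset G)
    (hgen : Subgroup.closure (S : Set G) = ⊤)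
    (hsym : ∀ s ∈ S, s⁻¹ ∈ S)
    (p : ℝ) (hp : 1 ≤ p) {m : ℕ} (g : Fin m → G)
    (hinf : ∀ i, ¬ IsOfFinOrder (g i))
    (hnconj : ∀ i j, i ≠ j → ¬ IsConj (g i) (g j))
    (hinv : ∀ (i : Fin m) (x : X),
      IsOfFinOrder (A.sec ((g i) ^ (cycLen A (g i) [x])) [x]) ∨
        ∃ j, IsConj (A.sec ((g i) ^ (cycLen A (g i) [x])) [x]) (g j))
    (hcontr : ∃ n₀ : ℕ, 1 ≤ n₀ ∧ eta A S p n₀ < 1) :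
    ∀ (z : ℂ) (v : Fin m → ℂ),
      ((thurstonMatrix A p g).map (fun x : ℝ => (x : ℂ))).mulVec v = z • v →
      v ≠ 0 → ‖z‖ < 1 := by
  classical
  obtain ⟨n₀, hn₀, heta⟩ := hcontr
  obtain ⟨c, hc0, hc1, M, hM1, hM⟩ := eta_extract A S hp heta
  intro z v hv hv0
  have hp0 : (0:ℝ) < p := by linarith
  set T := thurstonMatrix A p g with hTdef
  set K := (Fintype.card (Fin n₀ → X)).factorial with hKdef
  obtain ⟨D, hD0, q₁, hmaster⟩ :=
    master_inequality A S hgen hsym hp g hinf hnconj hc0 (fun gg hgg => hM gg hgg)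
  set B := levelMatrix A p g n₀ with hBdef
  have hBT : B = T ^ n₀ := levelMatrix_eq_pow A p g hinf hnconj hinv n₀ hn₀
  set F : Fin m → ℕ → ℝ := fun j q => (wordLength S ((g j) ^ (K * q)) : ℝ) with hFdef
  have hF0 : ∀ j q, 0 ≤ F j q := fun j q => Nat.cast_nonneg _
  have hFtend : ∀ j, Filter.Tendsto (fun q => F j q) Filter.atTop Filter.atTop := by
    intro j
    have h1 := tendsto_wordLength_pow hgen hsym (hinf j)
    have h2 : Filter.Tendsto (fun q : ℕ => K * q) Filter.atTop Filter.atTop := by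
      apply Filter.tendsto_atTop.mpr
      intro b
      refine Filter.eventually_atTop.mpr ⟨b, fun q hq => ?_⟩
      calc b ≤ q := hq
        _ ≤ K * q := Nat.le_mul_of_pos_left q (Nat.factorial_pos _)
    exact tendsto_natCast_atTop_atTop.comp (h1.comp h2)
  have hBnn : ∀ i j, 0 ≤ B i j := levelMatrix_nonneg A p g n₀
  have hsub : ∀ J : Finset (Fin m), J.Nonempty → ∃ U : Fin m → ℝ, (∀ j, 0 ≤ U j) ∧
      (∃ j ∈ J, 0 < U j) ∧ ∀ i ∈ J, ∑ j ∈ J, B i j * U j ≤ c ^ p * U i :=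
    fun J hJ => sub_vector B hBnn hp0 hc0 hD0 F hF0 hFtend hmaster J hJ
  -- eigenvector equation for powers
  have hpow : ∀ N : ℕ, ((T.map (fun x : ℝ => (x:ℂ))) ^ N).mulVec v = z ^ N • v := by
    intro N
    induction N with
    | zero => simp
    | succ N ihN =>
        rw [pow_succ', ← Matrix.mulVec_mulVec, ihN, Matrix.mulVec_smul, hv, smul_smul,
          ← pow_succ]
  have hmap : (B.map (fun x : ℝ => (x:ℂ))) = (T.map (fun x : ℝ => (x:ℂ))) ^ n₀ := by
    rw [hBT]
    exact map_pow_complex T n₀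
  have heigB : ∀ i ∈ (Finset.univ : Finset (Fin m)),
      ∑ j ∈ Finset.univ, ((B i j : ℝ) : ℂ) * v j = (z ^ n₀) * v i := by
    intro i _
    have h1 : (B.map (fun x : ℝ => (x:ℂ))).mulVec v = z ^ n₀ • v := by
      rw [hmap]; exact hpow n₀
    have h2 := congrFun h1 i
    simpa [Matrix.mulVec, dotProduct, Matrix.map_apply] using h2
  have hzb : ‖z ^ n₀‖ ≤ c ^ p :=
    pf_induction B hBnn hsub Finset.univ (z ^ n₀) v
      (fun j hj => absurd (Finset.mem_univ j) hj) hv0 heigB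
  have hcp : c ^ p < 1 := Real.rpow_lt_one hc0 hc1 hp0
  have habs : ‖z‖ ^ n₀ ≤ c ^ p := by rwa [norm_pow] at hzb
  by_contra hcon
  push_neg at hcon
  have h1 : (1:ℝ) ≤ ‖z‖ ^ n₀ := one_le_pow₀ hcon
  linarith
end
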